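/- arXiv:2408.09166 — 4 statements merged into one kernel-verified Lean document; each statement's English description precedes it below -/
import Mathlib

section
/- Let F(x,y,q,h) = Σ_{n,k≥0} Σ_{π ∈ C_{n,k}} x^n y^k q^{sp(π)} h^{hsp(π)}, a well-defined formal power series in ℚ[[x,y,q,h]] (the coefficient of each monomial is a finite count, since for fixed n there are finitely many compositions of n and sp(π) ≤ n, hsp(π) ≤ n, k ≤ n). For each integer a ≥ 1 let A_a = 1 − y²·x^{2a+1}·(q·h·(1−hx)^{−1} − (1−x)^{−1}) ∈ ℚ[[x,y,q,h]]; A_a has constant term 1 and is therefore invertible. Then F · (1 − Σ_{a≥1} x^a·y·A_a^{−1}) = 1, where Σ_{a≥1} x^a·y·A_a^{−1} is a well-defined power series because the a-th summand has x-adic order at least a. Equivalently, F(x,y,q,h) = 1/(1 − Σ_{a≥1} x^a y/(1 − y²x^{2a+1}(qh/(1−hx) − 1/(1−x)))). -/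
/-- The indices (0-based) of symmetric peaks of a list of naturals:
`i` is a symmetric peak if `L i < L (i+1)` and `L i = L (i+2)`. -/
def symPeakIdx (L : List ℕ) : Finset ℕ :=
  (Finset.range L.length).filter (fun i =>
    i + 2 < L.length ∧ L.getD i 0 < L.getD (i+1) 0 ∧ L.getD i 0 = L.getD (i+2) 0)

/-- `sp π`: the number of symmetric peaks of `π`. -/
def spL (L : List ℕ) : ℕ := (symPeakIdx L).card

/-- `hsp π`: the sum of the heights of the symmetric peaks of `π`. -/
def hspL (L : List ℕ) : ℕ := ∑ i ∈ symPeakIdx L, (L.getD (i+1) 0 - L.getD i 0)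

/-- Variables: `X 0 = x`, `X 1 = y`, `X 2 = q`, `X 3 = h`. -/
noncomputable abbrev Xv : Fin 4 → MvPowerSeries (Fin 4) ℚ := MvPowerSeries.X

/-- `F(x,y,q,h) = Σ_{n,k≥0} Σ_{π ∈ C_{n,k}} x^n y^k q^{sp(π)} h^{hsp(π)}`, defined
coefficientwise: the coefficient of `x^n y^k q^s h^t` is the number of compositions of `n`
with `k` parts, `s` symmetric peaks, and total symmetric-peak height `t`. -/
noncomputable def Fhsp : MvPowerSeries (Fin 4) ℚ := fun m =>
  ((Finset.univ : Finset (Composition (m 0))).filter (fun c =>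
    c.length = m 1 ∧ spL c.blocks = m 2 ∧ hspL c.blocks = m 3)).card

/-- `A_a = 1 − y²·x^{2a+1}·(q·h·(1−hx)⁻¹ − (1−x)⁻¹)`. -/
noncomputable def Ahsp (a : ℕ) : MvPowerSeries (Fin 4) ℚ :=
  1 - (Xv 1)^2 * (Xv 0)^(2*a+1) *
    (Xv 2 * Xv 3 * (1 - Xv 3 * Xv 0)⁻¹ - (1 - Xv 0)⁻¹)

/-- `Σ_{a≥1} x^a·y·A_a⁻¹`, defined coefficientwise: since the `a`-th summand has `x`-adic
order at least `a`, only the terms with `1 ≤ a ≤ m 0` contribute to the coefficient of a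
monomial `m`. -/
noncomputable def Shsp : MvPowerSeries (Fin 4) ℚ := fun m =>
  ∑ a ∈ Finset.Icc 1 (m 0), MvPowerSeries.coeff m ((Xv 0)^a * Xv 1 * (Ahsp a)⁻¹)

abbrev pk (c : ℕ) (L : List ℕ) : Prop := 2 ≤ L.length ∧ c < L.getD 0 0 ∧ c = L.getD 1 0

lemma mem_symPeakIdx {L : List ℕ} {i : ℕ} : i ∈ symPeakIdx L ↔
    i + 2 < L.length ∧ L.getD i 0 < L.getD (i+1) 0 ∧ L.getD i 0 = L.getD (i+2) 0 := by
  simp only [symPeakIdx, Finset.mem_filter, Finset.mem_range]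
  exact ⟨fun h => h.2, fun h => ⟨by omega, h⟩⟩

lemma symPeakIdx_cons (c : ℕ) (L : List ℕ) :
    symPeakIdx (c :: L) = (if pk c L then {0} else ∅) ∪ (symPeakIdx L).image (· + 1) := by
  ext i
  rw [Finset.mem_union, mem_symPeakIdx]
  cases i with
  | zero =>
    rw [List.length_cons]
    rw [show (c::L).getD 0 0 = c from List.getD_cons_zero,
      show (c::L).getD 1 0 = L.getD 0 0 from List.getD_cons_succ,
      show (c::L).getD 2 0 = L.getD 1 0 from List.getD_cons_succ]
    constructor
    · rintro ⟨h1, h2, h3⟩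
      have hp : pk c L := ⟨by omega, h2, h3⟩
      rw [if_pos hp]
      exact Or.inl (Finset.mem_singleton_self 0)
    · rintro (h | h)
      · by_cases hp : pk c L
        · exact ⟨by omega, hp.2.1, hp.2.2⟩
        · rw [if_neg hp] at h; exact absurd h (Finset.notMem_empty 0)
      · exfalso
        obtain ⟨b, _, hb⟩ := Finset.mem_image.1 h
        omega
  | succ j =>
    rw [List.length_cons]
    rw [show (c::L).getD (j+1) 0 = L.getD j 0 from List.getD_cons_succ,
      show (c::L).getD (j+2) 0 = L.getD (j+1) 0 from List.getD_cons_succ,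
      show (c::L).getD (j+3) 0 = L.getD (j+2) 0 from List.getD_cons_succ]
    constructor
    · rintro ⟨h1, h2, h3⟩
      refine Or.inr (Finset.mem_image.2 ⟨j, mem_symPeakIdx.2 ⟨by omega, h2, h3⟩, rfl⟩)
    · rintro (h | h)
      · exfalso; revert h; split
        · intro h; rw [Finset.mem_singleton] at h; omega
        · exact Finset.notMem_empty _
      · obtain ⟨b, hb, hbe⟩ := Finset.mem_image.1 h
        obtain ⟨h1, h2, h3⟩ := mem_symPeakIdx.1 hb
        have : b = j := by omega
        subst this
        exact ⟨by omega, h2, h3⟩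

lemma disj_aux (c : ℕ) (L : List ℕ) :
    Disjoint (if pk c L then ({0} : Finset ℕ) else ∅) ((symPeakIdx L).image (· + 1)) := by
  split <;> simp [Finset.disjoint_left]

lemma spL_cons (c : ℕ) (L : List ℕ) :
    spL (c :: L) = (if pk c L then 1 else 0) + spL L := by
  rw [spL, symPeakIdx_cons, Finset.card_union_of_disjoint (disj_aux c L),
    Finset.card_image_of_injective _ (add_left_injective 1)]
  split <;> simp [spL]

lemma hspL_cons (c : ℕ) (L : List ℕ) :
    hspL (c :: L) = (if pk c L then L.getD 0 0 - c else 0) + hspL L := by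
  rw [hspL, symPeakIdx_cons, Finset.sum_union (disj_aux c L),
    Finset.sum_image (fun a _ b _ h => by omega)]
  have h2 : ∑ b ∈ symPeakIdx L, ((c::L).getD (b+1+1) 0 - (c::L).getD (b+1) 0) = hspL L :=
    Finset.sum_congr rfl (fun b _ => by
      rw [show (c::L).getD (b+1+1) 0 = L.getD (b+1) 0 from List.getD_cons_succ,
        show (c::L).getD (b+1) 0 = L.getD b 0 from List.getD_cons_succ])
  rw [h2]
  congr 1
  split
  · rw [Finset.sum_singleton,
      show (c::L).getD 1 0 = L.getD 0 0 from List.getD_cons_succ,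
      show (c::L).getD 0 0 = c from List.getD_cons_zero]
  · exact Finset.sum_empty

/-- Build a composition from a list, with junk fallback. -/
def mkC (n : ℕ) (L : List ℕ) : Composition n :=
  if hyp : L.sum = n ∧ ∀ i ∈ L, 0 < i then ⟨L, fun {i} hi => hyp.2 i hi, hyp.1⟩
  else Composition.ones n

lemma mkC_blocks {n : ℕ} {L : List ℕ} (h1 : L.sum = n) (h2 : ∀ i ∈ L, 0 < i) :
    (mkC n L).blocks = L := by
  rw [mkC, dif_pos ⟨h1, h2⟩]

lemma blocks_head_cons {m : ℕ} (π : Composition m) (h : 0 < π.blocks.getD 0 0) :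
    π.blocks = π.blocks.getD 0 0 :: π.blocks.tail := by
  cases hl : π.blocks with
  | nil => rw [hl] at h; simp at h
  | cons x xs => simp

lemma card_cons_bij (h n : ℕ) (hh : 0 < h) (P : List ℕ → Prop) [DecidablePred P] :
    ((Finset.univ : Finset (Composition (h+n))).filter
      (fun π => π.blocks.getD 0 0 = h ∧ P π.blocks.tail)).card
    = ((Finset.univ : Finset (Composition n)).filter (fun σ => P σ.blocks)).card := by
  apply Finset.card_nbij' (i := fun π => mkC n π.blocks.tail)
    (j := fun σ => mkC (h+n) (h :: σ.blocks))
  · intro π hπ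
    rw [Finset.mem_coe, Finset.mem_filter] at hπ ⊢
    obtain ⟨-, hd, hP⟩ := hπ
    have hcons := blocks_head_cons π (by omega)
    rw [hd] at hcons
    have hsum : π.blocks.tail.sum = n := by
      have := π.blocks_sum
      rw [hcons] at this
      simp only [List.sum_cons] at this
      omega
    have hpos : ∀ i ∈ π.blocks.tail, 0 < i := fun i hi =>
      π.blocks_pos (List.mem_of_mem_tail hi)
    rw [mkC_blocks hsum hpos]
    exact ⟨Finset.mem_univ _, hP⟩
  · intro σ hσ
    rw [Finset.mem_coe, Finset.mem_filter] at hσ ⊢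
    have hsum : (h :: σ.blocks).sum = h + n := by simp [σ.blocks_sum]
    have hpos : ∀ i ∈ h :: σ.blocks, 0 < i := by
      intro i hi
      rcases List.mem_cons.1 hi with rfl | hi
      · exact hh
      · exact σ.blocks_pos hi
    rw [mkC_blocks hsum hpos]
    exact ⟨Finset.mem_univ _, rfl, hσ.2⟩
  · intro π hπ
    rw [Finset.mem_coe, Finset.mem_filter] at hπ
    obtain ⟨-, hd, hP⟩ := hπ
    have hcons := blocks_head_cons π (by omega)
    rw [hd] at hcons
    have hsum : π.blocks.tail.sum = n := by
      have := π.blocks_sum; rw [hcons] at this; simp only [List.sum_cons] at this; omega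
    have hpos : ∀ i ∈ π.blocks.tail, 0 < i := fun i hi =>
      π.blocks_pos (List.mem_of_mem_tail hi)
    ext1
    rw [mkC_blocks (by rw [mkC_blocks hsum hpos]; simp [hsum]) (by
      rw [mkC_blocks hsum hpos]
      intro i hi
      rcases List.mem_cons.1 hi with rfl | hi
      · omega
      · exact hpos i hi)]
    rw [mkC_blocks hsum hpos]
    exact hcons.symm
  · intro σ hσ
    have hsum : (h :: σ.blocks).sum = h + n := by simp [σ.blocks_sum]
    have hpos : ∀ i ∈ h :: σ.blocks, 0 < i := by
      intro i hi
      rcases List.mem_cons.1 hi with rfl | hi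
      · exact hh
      · exact σ.blocks_pos hi
    ext1
    rw [mkC_blocks (by rw [mkC_blocks hsum hpos]; exact σ.blocks_sum) (by
      rw [mkC_blocks hsum hpos]; exact fun i hi => σ.blocks_pos hi)]
    rw [mkC_blocks hsum hpos]
    rfl


lemma head_tail_sum {m : ℕ} (π : Composition m) (h : 0 < π.blocks.getD 0 0) :
    π.blocks.getD 0 0 + π.blocks.tail.sum = m := by
  have hs := π.blocks_sum
  rw [blocks_head_cons π h] at hs
  rw [List.sum_cons] at hs
  exact hs

lemma tail_pos {m : ℕ} (π : Composition m) : ∀ i ∈ π.blocks.tail, 0 < i :=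
  fun _ hi => π.blocks_pos (List.mem_of_mem_tail hi)

lemma card_dec_bij (b n : ℕ) (hb : 1 ≤ b) (P : ℕ → List ℕ → Prop)
    [∀ c, DecidablePred (P c)] :
    ((Finset.univ : Finset (Composition (n+1))).filter
      (fun π => b+1 ≤ π.blocks.getD 0 0 ∧ P (π.blocks.getD 0 0) π.blocks.tail)).card
    = ((Finset.univ : Finset (Composition n)).filter
      (fun π => b ≤ π.blocks.getD 0 0 ∧ P (π.blocks.getD 0 0 + 1) π.blocks.tail)).card := by
  apply Finset.card_nbij'
    (i := fun π => mkC n ((π.blocks.getD 0 0 - 1) :: π.blocks.tail))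
    (j := fun π => mkC (n+1) ((π.blocks.getD 0 0 + 1) :: π.blocks.tail))
  · intro π hπ
    rw [Finset.mem_coe, Finset.mem_filter] at hπ ⊢
    obtain ⟨-, hc, hP⟩ := hπ
    have hsum := head_tail_sum π (by omega)
    have hbl : (mkC n ((π.blocks.getD 0 0 - 1) :: π.blocks.tail)).blocks
        = (π.blocks.getD 0 0 - 1) :: π.blocks.tail := by
      apply mkC_blocks
      · rw [List.sum_cons]; omega
      · intro i hi
        rcases List.mem_cons.1 hi with rfl | hi
        · omega
        · exact tail_pos π i hi
    rw [hbl]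
    refine ⟨Finset.mem_univ _, ?_, ?_⟩
    · rw [List.getD_cons_zero]; omega
    · rw [List.getD_cons_zero]
      show P (π.blocks.getD 0 0 - 1 + 1) π.blocks.tail
      have he : π.blocks.getD 0 0 - 1 + 1 = π.blocks.getD 0 0 := by omega
      rw [he]
      exact hP
  · intro π hπ
    rw [Finset.mem_coe, Finset.mem_filter] at hπ ⊢
    obtain ⟨-, hc, hP⟩ := hπ
    have hsum := head_tail_sum π (by omega)
    have hbl : (mkC (n+1) ((π.blocks.getD 0 0 + 1) :: π.blocks.tail)).blocks
        = (π.blocks.getD 0 0 + 1) :: π.blocks.tail := by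
      apply mkC_blocks
      · rw [List.sum_cons]; omega
      · intro i hi
        rcases List.mem_cons.1 hi with rfl | hi
        · omega
        · exact tail_pos π i hi
    rw [hbl]
    refine ⟨Finset.mem_univ _, ?_, ?_⟩
    · rw [List.getD_cons_zero]; omega
    · rw [List.getD_cons_zero]
      exact hP
  · intro π hπ
    rw [Finset.mem_coe, Finset.mem_filter] at hπ
    obtain ⟨-, hc, hP⟩ := hπ
    have hsum := head_tail_sum π (by omega)
    have hbl : (mkC n ((π.blocks.getD 0 0 - 1) :: π.blocks.tail)).blocks
        = (π.blocks.getD 0 0 - 1) :: π.blocks.tail := by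
      apply mkC_blocks
      · rw [List.sum_cons]; omega
      · intro i hi
        rcases List.mem_cons.1 hi with rfl | hi
        · omega
        · exact tail_pos π i hi
    ext1
    rw [mkC_blocks (by rw [hbl]; simp only [List.getD_cons_zero, List.tail_cons, List.sum_cons]; omega)
      (by rw [hbl]; intro i hi
          rcases List.mem_cons.1 hi with rfl | hi
          · simp only [List.getD_cons_zero]; omega
          · exact tail_pos π i (by simpa using hi))]
    rw [hbl]
    simp only [List.getD_cons_zero, List.tail_cons]
    have he : π.blocks.getD 0 0 - 1 + 1 = π.blocks.getD 0 0 := by omega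
    rw [he]
    exact (blocks_head_cons π (by omega)).symm
  · intro π hπ
    rw [Finset.mem_coe, Finset.mem_filter] at hπ
    obtain ⟨-, hc, hP⟩ := hπ
    have hsum := head_tail_sum π (by omega)
    have hbl : (mkC (n+1) ((π.blocks.getD 0 0 + 1) :: π.blocks.tail)).blocks
        = (π.blocks.getD 0 0 + 1) :: π.blocks.tail := by
      apply mkC_blocks
      · rw [List.sum_cons]; omega
      · intro i hi
        rcases List.mem_cons.1 hi with rfl | hi
        · omega
        · exact tail_pos π i hi
    ext1
    rw [mkC_blocks (by rw [hbl]; simp only [List.getD_cons_zero, List.tail_cons, List.sum_cons]; omega)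
      (by rw [hbl]; intro i hi
          rcases List.mem_cons.1 hi with rfl | hi
          · simp only [List.getD_cons_zero]; omega
          · exact tail_pos π i (by simpa using hi))]
    rw [hbl]
    simp only [List.getD_cons_zero, List.tail_cons]
    exact (blocks_head_cons π (by omega)).symm

open Finset

def cF (n k s t : ℕ) : ℕ :=
  ((Finset.univ : Finset (Composition n)).filter (fun c =>
    c.length = k ∧ spL c.blocks = s ∧ hspL c.blocks = t)).card

def cFa (a n k s t : ℕ) : ℕ :=
  ((Finset.univ : Finset (Composition n)).filter (fun c =>
    c.blocks.getD 0 0 = a ∧ c.blocks.length = k ∧ spL c.blocks = s ∧ hspL c.blocks = t)).card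

def cK (a n k s t : ℕ) : ℕ :=
  ((Finset.univ : Finset (Composition n)).filter (fun c =>
    pk a c.blocks ∧ c.blocks.length = k ∧ spL c.blocks = s ∧ hspL c.blocks = t)).card

def cH (a n k s t : ℕ) : ℕ :=
  ((Finset.univ : Finset (Composition n)).filter (fun c =>
    pk a c.blocks ∧ c.blocks.length = k ∧ 1 + spL c.blocks = s ∧
      (c.blocks.getD 0 0 - a) + hspL c.blocks = t)).card

lemma comp0_blocks (c : Composition 0) : c.blocks = [] := by
  cases hl : c.blocks with
  | nil => rfl
  | cons x xs =>
    exfalso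
    have h1 := c.blocks_pos (hl ▸ List.mem_cons_self (a := x) (l := xs))
    have h2 := c.blocks_sum
    rw [hl, List.sum_cons] at h2
    omega

lemma spL_nil : spL [] = 0 := rfl
lemma hspL_nil : hspL [] = 0 := by simp [hspL, symPeakIdx]

/-- The number of compositions of 0. -/
lemma cF_zero (k s t : ℕ) : cF 0 k s t = if k = 0 ∧ s = 0 ∧ t = 0 then 1 else 0 := by
  have huniv : (Finset.univ : Finset (Composition 0)).card = 1 := by
    rw [Finset.card_eq_one]
    exact ⟨Composition.ones 0, Finset.eq_singleton_iff_unique_mem.2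
      ⟨Finset.mem_univ _, fun c _ => by ext1; rw [comp0_blocks, comp0_blocks]⟩⟩
  split
  · next hc =>
    obtain ⟨rfl, rfl, rfl⟩ := hc
    have hall : ∀ c ∈ (Finset.univ : Finset (Composition 0)),
        c.length = 0 ∧ spL c.blocks = 0 ∧ hspL c.blocks = 0 := by
      intro c _
      have hb := comp0_blocks c
      refine ⟨?_, ?_, ?_⟩
      · rw [← c.blocks_length, hb]; rfl
      · rw [hb]; rfl
      · rw [hb]; exact hspL_nil
    rw [cF, Finset.filter_true_of_mem hall, huniv]
  · next hc =>
    rw [cF, Finset.card_eq_zero, Finset.filter_eq_empty_iff]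
    intro c _
    have hb := comp0_blocks c
    rintro ⟨h1, h2, h3⟩
    rw [← c.blocks_length, hb] at h1
    rw [hb] at h2 h3
    rw [hspL_nil] at h3
    exact hc ⟨h1.symm, h2.symm, h3.symm⟩

/-- Partition of compositions of `n` by first part. -/
lemma cF_split (n k s t : ℕ) :
    cF n k s t = (if n = 0 ∧ k = 0 ∧ s = 0 ∧ t = 0 then 1 else 0)
      + ∑ a ∈ Finset.Icc 1 n, cFa a n k s t := by
  rcases Nat.eq_zero_or_pos n with rfl | hn
  · rw [cF_zero, Finset.Icc_eq_empty (by omega), Finset.sum_empty, add_zero]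
    by_cases h : k = 0 ∧ s = 0 ∧ t = 0
    · rw [if_pos h, if_pos ⟨rfl, h.1, h.2.1, h.2.2⟩]
    · rw [if_neg h, if_neg (by tauto)]
  · rw [if_neg (by omega), zero_add, cF]
    rw [Finset.card_eq_sum_card_fiberwise
      (f := fun c : Composition n => c.blocks.getD 0 0) (t := Finset.Icc 1 n) ?mem]
    case mem =>
      intro c _
      have hne : c.blocks ≠ [] := by
        intro h0
        have := c.blocks_sum
        rw [h0] at this
        simp at this
        omega
      obtain ⟨x, xs, hl⟩ := List.exists_cons_of_ne_nil hne
      have hx : c.blocks.getD 0 0 = x := by rw [hl]; rfl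
      have hmem : x ∈ c.blocks := hl ▸ List.mem_cons_self (a := x) (l := xs)
      have hpos := c.blocks_pos hmem
      have hle : x ≤ n := by
        have := c.blocks_sum
        rw [hl, List.sum_cons] at this
        omega
      show c.blocks.getD 0 0 ∈ Finset.Icc 1 n
      rw [hx]
      exact Finset.mem_Icc.2 ⟨hpos, hle⟩
    refine Finset.sum_congr rfl (fun a _ => ?_)
    rw [Finset.filter_filter, cFa]
    congr 1
    apply Finset.filter_congr
    intro c _
    rw [c.blocks_length]
    tauto

lemma cFa_zero (a n k s t : ℕ) (ha : 0 < a) (h : n < a ∨ k = 0) : cFa a n k s t = 0 := by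
  rw [cFa, Finset.card_eq_zero, Finset.filter_eq_empty_iff]
  rintro c - ⟨h1, h2, -⟩
  have hsum := head_tail_sum c (by omega)
  rw [h1] at hsum
  have hlen : 0 < c.blocks.length := by
    rw [blocks_head_cons c (by omega : 0 < c.blocks.getD 0 0)]
    simp
  omega

lemma cK_pred_facts {n : ℕ} (a : ℕ) (c : Composition n) (hpk : pk a c.blocks) :
    2 * a + 1 ≤ n ∧ 2 ≤ c.blocks.length ∧ 1 ≤ c.blocks.getD 0 0 - a := by
  obtain ⟨hlen, hlt, heq⟩ := hpk
  cases hbl : c.blocks with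
  | nil => rw [hbl] at hlen; simp at hlen
  | cons x tl =>
    cases htl : tl with
    | nil => rw [hbl, htl] at hlen; simp at hlen
    | cons y tl' =>
      have hsum := c.blocks_sum
      rw [hbl, htl] at hsum
      simp only [List.sum_cons] at hsum
      rw [hbl, htl] at hlt heq
      simp only [List.getD_cons_zero] at hlt
      have heq' : y = a := by
        have : (x :: y :: tl').getD 1 0 = y := rfl
        rw [this] at heq
        omega
      refine ⟨by omega, by simp, ?_⟩
      simp only [List.getD_cons_zero]
      omega

lemma cK_zero (a n k s t : ℕ) (h : n < 2*a+1 ∨ k < 2) : cK a n k s t = 0 := by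
  rw [cK, Finset.card_eq_zero, Finset.filter_eq_empty_iff]
  rintro c - ⟨h1, h2, -⟩
  obtain ⟨f1, f2, f3⟩ := cK_pred_facts a c h1
  omega

lemma cH_zero (a n k s t : ℕ) (h : n < 2*a+1 ∨ k < 2 ∨ s = 0 ∨ t = 0) : cH a n k s t = 0 := by
  rw [cH, Finset.card_eq_zero, Finset.filter_eq_empty_iff]
  rintro c - ⟨h1, h2, h3, h4⟩
  obtain ⟨f1, f2, f3⟩ := cK_pred_facts a c h1
  omega

lemma len_pos_of_getD {tl : List ℕ} {a : ℕ} (h : tl.getD 0 0 = a) (ha : 0 < a) :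
    1 ≤ tl.length := by
  cases tl with
  | nil => simp at h; omega
  | cons y tl' => simp

lemma getD1_cons (x : ℕ) (tl : List ℕ) : (x :: tl).getD 1 0 = tl.getD 0 0 := rfl

/-- Main recursion: prepending `a` to a composition. -/
lemma N2 (a n k s t : ℕ) (ha : 0 < a) :
    cFa a (a+n) (k+1) s t + cK a n k s t = cF n k s t + cH a n k s t := by
  classical
  set Q : List ℕ → Prop := fun σ => σ.length = k ∧ ((if pk a σ then 1 else 0) + spL σ = s) ∧
    ((if pk a σ then σ.getD 0 0 - a else 0) + hspL σ = t) with hQ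
  have step1 : cFa a (a+n) (k+1) s t =
      ((Finset.univ : Finset (Composition (a+n))).filter
        (fun π => π.blocks.getD 0 0 = a ∧ Q π.blocks.tail)).card := by
    rw [cFa]
    congr 1
    apply Finset.filter_congr
    intro π _
    cases hbl : π.blocks with
    | nil =>
      simp only [List.getD_nil, List.length_nil]
      constructor <;> rintro ⟨h0, -⟩ <;> omega
    | cons x tl =>
      simp only [List.getD_cons_zero, List.length_cons, List.tail_cons, hQ]
      constructor
      · rintro ⟨rfl, h1, h2, h3⟩
        rw [spL_cons] at h2
        rw [hspL_cons] at h3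
        exact ⟨rfl, by omega, h2, h3⟩
      · rintro ⟨rfl, h1, h2, h3⟩
        refine ⟨rfl, by omega, ?_, ?_⟩
        · rw [spL_cons]; exact h2
        · rw [hspL_cons]; exact h3
  have step2 := card_cons_bij a n ha Q
  -- split the σ-side by pk
  have step3 := Finset.card_filter_add_card_filter_not
    (s := (Finset.univ : Finset (Composition n)).filter (fun σ => Q σ.blocks))
    (p := fun σ => pk a σ.blocks)
  rw [Finset.filter_filter, Finset.filter_filter] at step3
  have idH : ((Finset.univ : Finset (Composition n)).filter
      (fun σ => Q σ.blocks ∧ pk a σ.blocks)).card = cH a n k s t := by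
    rw [cH]
    congr 1
    apply Finset.filter_congr
    intro σ _
    simp only [hQ]
    constructor
    · rintro ⟨⟨h1, h2, h3⟩, hp⟩
      rw [if_pos hp] at h2 h3
      exact ⟨hp, h1, by omega, h3⟩
    · rintro ⟨hp, h1, h2, h3⟩
      exact ⟨⟨h1, by rw [if_pos hp]; omega, by rw [if_pos hp]; exact h3⟩, hp⟩
  have idNK : ((Finset.univ : Finset (Composition n)).filter
      (fun σ => Q σ.blocks ∧ ¬ pk a σ.blocks)).card =
      ((Finset.univ : Finset (Composition n)).filter
      (fun σ => ¬ pk a σ.blocks ∧ σ.blocks.length = k ∧ spL σ.blocks = s ∧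
        hspL σ.blocks = t)).card := by
    congr 1
    apply Finset.filter_congr
    intro σ _
    simp only [hQ]
    constructor
    · rintro ⟨⟨h1, h2, h3⟩, hp⟩
      rw [if_neg hp] at h2 h3
      exact ⟨hp, h1, by omega, by omega⟩
    · rintro ⟨hp, h1, h2, h3⟩
      exact ⟨⟨h1, by rw [if_neg hp]; omega, by rw [if_neg hp]; omega⟩, hp⟩
  -- split cF by pk
  have step4 := Finset.card_filter_add_card_filter_not
    (s := (Finset.univ : Finset (Composition n)).filter
      (fun c => c.length = k ∧ spL c.blocks = s ∧ hspL c.blocks = t))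
    (p := fun σ => pk a σ.blocks)
  rw [Finset.filter_filter, Finset.filter_filter] at step4
  have idK : ((Finset.univ : Finset (Composition n)).filter
      (fun c => (c.length = k ∧ spL c.blocks = s ∧ hspL c.blocks = t) ∧ pk a c.blocks)).card
      = cK a n k s t := by
    rw [cK]
    congr 1
    apply Finset.filter_congr
    intro σ _
    rw [σ.blocks_length]
    tauto
  have idNK2 : ((Finset.univ : Finset (Composition n)).filter
      (fun c => (c.length = k ∧ spL c.blocks = s ∧ hspL c.blocks = t) ∧ ¬ pk a c.blocks)).card
      = ((Finset.univ : Finset (Composition n)).filter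
      (fun σ => ¬ pk a σ.blocks ∧ σ.blocks.length = k ∧ spL σ.blocks = s ∧
        hspL σ.blocks = t)).card := by
    congr 1
    apply Finset.filter_congr
    intro σ _
    rw [σ.blocks_length]
    tauto
  rw [step1, step2]
  rw [idH, idNK] at step3
  rw [idK, idNK2] at step4
  rw [cF] at *
  omega

def pK1 (a n k s t : ℕ) : ℕ :=
  ((Finset.univ : Finset (Composition n)).filter (fun π =>
    π.blocks.getD 0 0 = a+1 ∧ pk a π.blocks ∧ π.blocks.length = k ∧
      spL π.blocks = s ∧ hspL π.blocks = t)).card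

def pK2 (a n k s t : ℕ) : ℕ :=
  ((Finset.univ : Finset (Composition n)).filter (fun π =>
    (a+1)+1 ≤ π.blocks.getD 0 0 ∧ pk a π.blocks ∧ π.blocks.length = k ∧
      spL π.blocks = s ∧ hspL π.blocks = t)).card

def pH1 (a n k s t : ℕ) : ℕ :=
  ((Finset.univ : Finset (Composition n)).filter (fun π =>
    π.blocks.getD 0 0 = a+1 ∧ pk a π.blocks ∧ π.blocks.length = k ∧
      1 + spL π.blocks = s ∧ (π.blocks.getD 0 0 - a) + hspL π.blocks = t)).card

def pH2 (a n k s t : ℕ) : ℕ :=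
  ((Finset.univ : Finset (Composition n)).filter (fun π =>
    (a+1)+1 ≤ π.blocks.getD 0 0 ∧ pk a π.blocks ∧ π.blocks.length = k ∧
      1 + spL π.blocks = s ∧ (π.blocks.getD 0 0 - a) + hspL π.blocks = t)).card

lemma cK_split (a n k s t : ℕ) :
    cK a n k s t = pK1 a n k s t + pK2 a n k s t := by
  classical
  have step := Finset.card_filter_add_card_filter_not
    (s := (Finset.univ : Finset (Composition n)).filter (fun c =>
      pk a c.blocks ∧ c.blocks.length = k ∧ spL c.blocks = s ∧ hspL c.blocks = t))
    (p := fun c => c.blocks.getD 0 0 = a+1)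
  rw [Finset.filter_filter, Finset.filter_filter] at step
  rw [cK, ← step, pK1, pK2]
  congr 1
  · congr 1
    apply Finset.filter_congr
    intro c _
    tauto
  · congr 1
    apply Finset.filter_congr
    intro c _
    constructor
    · rintro ⟨⟨hpk, h⟩, hne⟩
      have := hpk.2.1
      exact ⟨by omega, hpk, h⟩
    · rintro ⟨hge, hpk, h⟩
      exact ⟨⟨hpk, h⟩, by omega⟩

lemma cH_split (a n k s t : ℕ) :
    cH a n k s t = pH1 a n k s t + pH2 a n k s t := by
  classical
  have step := Finset.card_filter_add_card_filter_not
    (s := (Finset.univ : Finset (Composition n)).filter (fun c =>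
      pk a c.blocks ∧ c.blocks.length = k ∧ 1 + spL c.blocks = s ∧
        (c.blocks.getD 0 0 - a) + hspL c.blocks = t))
    (p := fun c => c.blocks.getD 0 0 = a+1)
  rw [Finset.filter_filter, Finset.filter_filter] at step
  rw [cH, ← step, pH1, pH2]
  congr 1
  · congr 1
    apply Finset.filter_congr
    intro c _
    tauto
  · congr 1
    apply Finset.filter_congr
    intro c _
    constructor
    · rintro ⟨⟨hpk, h⟩, hne⟩
      have := hpk.2.1
      exact ⟨by omega, hpk, h⟩
    · rintro ⟨hge, hpk, h⟩
      exact ⟨⟨hpk, h⟩, by omega⟩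

lemma pK1_le (a n k s t : ℕ) : pK1 a n k s t ≤ cK a n k s t := by
  exact Finset.card_le_card (Finset.monotone_filter_right _ (fun c _ hc => hc.2))

lemma pH1_le (a n k s t : ℕ) : pH1 a n k s t ≤ cH a n k s t := by
  exact Finset.card_le_card (Finset.monotone_filter_right _ (fun c _ hc => hc.2))

lemma N3a (a n k s t : ℕ) (ha : 0 < a) :
    pK1 a ((a+1)+n) (k+1) s t = cFa a n k s t := by
  classical
  have master := card_cons_bij (a+1) n (by omega)
    (P := fun σ => σ.getD 0 0 = a ∧ σ.length = k ∧ spL σ = s ∧ hspL σ = t)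
  rw [pK1, cFa, ← master]
  congr 1
  apply Finset.filter_congr
  intro π _
  cases hbl : π.blocks with
  | nil =>
    simp only [List.getD_nil]
    constructor <;> rintro ⟨h0, -⟩ <;> omega
  | cons x tl =>
    simp only [List.getD_cons_zero, List.length_cons, List.tail_cons]
    constructor
    · rintro ⟨rfl, hpk, h1, h2, h3⟩
      have htl0 : tl.getD 0 0 = a := by
        have := hpk.2.2
        rw [getD1_cons] at this
        omega
      have hnpk : ¬ pk (a+1) tl := by
        rintro ⟨-, hlt, -⟩
        omega
      rw [spL_cons, if_neg hnpk] at h2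
      rw [hspL_cons, if_neg hnpk] at h3
      exact ⟨rfl, htl0, by omega, by omega, by omega⟩
    · rintro ⟨rfl, htl0, h1, h2, h3⟩
      have hnpk : ¬ pk (a+1) tl := by
        rintro ⟨-, hlt, -⟩
        omega
      have hpk : pk a ((a+1) :: tl) := by
        refine ⟨?_, ?_, ?_⟩
        · have := len_pos_of_getD htl0 ha
          simp only [List.length_cons]
          omega
        · simp only [List.getD_cons_zero]
          omega
        · rw [getD1_cons]
          omega
      refine ⟨rfl, hpk, by omega, ?_, ?_⟩
      · rw [spL_cons, if_neg hnpk]; omega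
      · rw [hspL_cons, if_neg hnpk]; omega

lemma N3b (a n k s t : ℕ) (ha : 0 < a) :
    pK2 a (n+1) k s t = cK a n k s t := by
  classical
  calc pK2 a (n+1) k s t
      = ((Finset.univ : Finset (Composition (n+1))).filter (fun π =>
          (a+1)+1 ≤ π.blocks.getD 0 0 ∧ (a = π.blocks.tail.getD 0 0 ∧
            π.blocks.tail.length + 1 = k ∧ spL π.blocks.tail = s ∧
            hspL π.blocks.tail = t))).card := by
        rw [pK2]
        congr 1
        apply Finset.filter_congr
        intro π _
        cases hbl : π.blocks with
        | nil =>
          simp only [List.getD_nil]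
          constructor <;> rintro ⟨h0, -⟩ <;> omega
        | cons x tl =>
          simp only [List.getD_cons_zero, List.length_cons, List.tail_cons]
          constructor
          · rintro ⟨hge, hpk, h1, h2, h3⟩
            have htl0 : a = tl.getD 0 0 := by
              have := hpk.2.2
              rw [getD1_cons] at this
              exact this
            have hnpk : ¬ pk x tl := by
              rintro ⟨-, hlt, -⟩
              omega
            rw [spL_cons, if_neg hnpk] at h2
            rw [hspL_cons, if_neg hnpk] at h3
            exact ⟨hge, htl0, by omega, by omega, by omega⟩
          · rintro ⟨hge, htl0, h1, h2, h3⟩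
            have hnpk : ¬ pk x tl := by
              rintro ⟨-, hlt, -⟩
              omega
            have hpk : pk a (x :: tl) := by
              refine ⟨?_, ?_, ?_⟩
              · have := len_pos_of_getD htl0.symm ha
                simp only [List.length_cons]
                omega
              · simp only [List.getD_cons_zero]
                omega
              · rw [getD1_cons]
                omega
            refine ⟨hge, hpk, by omega, ?_, ?_⟩
            · rw [spL_cons, if_neg hnpk]; omega
            · rw [hspL_cons, if_neg hnpk]; omega
    _ = ((Finset.univ : Finset (Composition n)).filter (fun π =>
          a+1 ≤ π.blocks.getD 0 0 ∧ (a = π.blocks.tail.getD 0 0 ∧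
            π.blocks.tail.length + 1 = k ∧ spL π.blocks.tail = s ∧
            hspL π.blocks.tail = t))).card :=
        card_dec_bij (a+1) n (by omega)
          (fun _ σ => a = σ.getD 0 0 ∧ σ.length + 1 = k ∧ spL σ = s ∧ hspL σ = t)
    _ = cK a n k s t := by
        rw [cK]
        congr 1
        apply Finset.filter_congr
        intro π _
        cases hbl : π.blocks with
        | nil =>
          simp only [List.getD_nil]
          constructor
          · rintro ⟨h0, -⟩; omega
          · rintro ⟨⟨hl, -, -⟩, -⟩; simp at hl
        | cons x tl =>
          simp only [List.getD_cons_zero, List.length_cons, List.tail_cons]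
          constructor
          · rintro ⟨hge, htl0, h1, h2, h3⟩
            have hnpk : ¬ pk x tl := by
              rintro ⟨-, hlt, -⟩
              omega
            have hpk : pk a (x :: tl) := by
              refine ⟨?_, ?_, ?_⟩
              · have := len_pos_of_getD htl0.symm ha
                simp only [List.length_cons]
                omega
              · simp only [List.getD_cons_zero]
                omega
              · rw [getD1_cons]
                omega
            refine ⟨hpk, by omega, ?_, ?_⟩
            · rw [spL_cons, if_neg hnpk]; omega
            · rw [hspL_cons, if_neg hnpk]; omega
          · rintro ⟨hpk, h1, h2, h3⟩
            have htl0 : a = tl.getD 0 0 := by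
              have := hpk.2.2
              rw [getD1_cons] at this
              exact this
            have hge : a + 1 ≤ x := by
              have := hpk.2.1
              simp only [List.getD_cons_zero] at this
              omega
            have hnpk : ¬ pk x tl := by
              rintro ⟨-, hlt, -⟩
              omega
            rw [spL_cons, if_neg hnpk] at h2
            rw [hspL_cons, if_neg hnpk] at h3
            exact ⟨hge, htl0, by omega, by omega, by omega⟩

lemma N4a (a n k s t : ℕ) (ha : 0 < a) :
    pH1 a ((a+1)+n) (k+1) (s+1) (t+1) = cFa a n k s t := by
  classical
  have master := card_cons_bij (a+1) n (by omega)
    (P := fun σ => σ.getD 0 0 = a ∧ σ.length = k ∧ spL σ = s ∧ hspL σ = t)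
  rw [pH1, cFa, ← master]
  congr 1
  apply Finset.filter_congr
  intro π _
  cases hbl : π.blocks with
  | nil =>
    simp only [List.getD_nil]
    constructor <;> rintro ⟨h0, -⟩ <;> omega
  | cons x tl =>
    simp only [List.getD_cons_zero, List.length_cons, List.tail_cons]
    constructor
    · rintro ⟨rfl, hpk, h1, h2, h3⟩
      have htl0 : tl.getD 0 0 = a := by
        have := hpk.2.2
        rw [getD1_cons] at this
        omega
      have hnpk : ¬ pk (a+1) tl := by
        rintro ⟨-, hlt, -⟩
        omega
      rw [spL_cons, if_neg hnpk] at h2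
      rw [hspL_cons, if_neg hnpk] at h3
      exact ⟨rfl, htl0, by omega, by omega, by omega⟩
    · rintro ⟨rfl, htl0, h1, h2, h3⟩
      have hnpk : ¬ pk (a+1) tl := by
        rintro ⟨-, hlt, -⟩
        omega
      have hpk : pk a ((a+1) :: tl) := by
        refine ⟨?_, ?_, ?_⟩
        · have := len_pos_of_getD htl0 ha
          simp only [List.length_cons]
          omega
        · simp only [List.getD_cons_zero]
          omega
        · rw [getD1_cons]
          omega
      refine ⟨rfl, hpk, by omega, ?_, ?_⟩
      · rw [spL_cons, if_neg hnpk]; omega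
      · rw [hspL_cons, if_neg hnpk]; omega

lemma N4b (a n k s t : ℕ) (ha : 0 < a) :
    pH2 a (n+1) k s (t+1) = cH a n k s t := by
  classical
  calc pH2 a (n+1) k s (t+1)
      = ((Finset.univ : Finset (Composition (n+1))).filter (fun π =>
          (a+1)+1 ≤ π.blocks.getD 0 0 ∧ (a = π.blocks.tail.getD 0 0 ∧
            π.blocks.tail.length + 1 = k ∧ 1 + spL π.blocks.tail = s ∧
            (π.blocks.getD 0 0 - a) + hspL π.blocks.tail = t + 1))).card := by
        rw [pH2]
        congr 1
        apply Finset.filter_congr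
        intro π _
        cases hbl : π.blocks with
        | nil =>
          simp only [List.getD_nil]
          constructor <;> rintro ⟨h0, -⟩ <;> omega
        | cons x tl =>
          simp only [List.getD_cons_zero, List.length_cons, List.tail_cons]
          constructor
          · rintro ⟨hge, hpk, h1, h2, h3⟩
            have htl0 : a = tl.getD 0 0 := by
              have := hpk.2.2
              rw [getD1_cons] at this
              exact this
            have hnpk : ¬ pk x tl := by
              rintro ⟨-, hlt, -⟩
              omega
            rw [spL_cons, if_neg hnpk] at h2
            rw [hspL_cons, if_neg hnpk] at h3
            exact ⟨hge, htl0, by omega, by omega, by omega⟩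
          · rintro ⟨hge, htl0, h1, h2, h3⟩
            have hnpk : ¬ pk x tl := by
              rintro ⟨-, hlt, -⟩
              omega
            have hpk : pk a (x :: tl) := by
              refine ⟨?_, ?_, ?_⟩
              · have := len_pos_of_getD htl0.symm ha
                simp only [List.length_cons]
                omega
              · simp only [List.getD_cons_zero]
                omega
              · rw [getD1_cons]
                omega
            refine ⟨hge, hpk, by omega, ?_, ?_⟩
            · rw [spL_cons, if_neg hnpk]; omega
            · rw [hspL_cons, if_neg hnpk]; omega
    _ = ((Finset.univ : Finset (Composition n)).filter (fun π =>
          a+1 ≤ π.blocks.getD 0 0 ∧ (a = π.blocks.tail.getD 0 0 ∧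
            π.blocks.tail.length + 1 = k ∧ 1 + spL π.blocks.tail = s ∧
            (π.blocks.getD 0 0 + 1 - a) + hspL π.blocks.tail = t + 1))).card :=
        card_dec_bij (a+1) n (by omega)
          (fun c σ => a = σ.getD 0 0 ∧ σ.length + 1 = k ∧ 1 + spL σ = s ∧
            (c - a) + hspL σ = t + 1)
    _ = cH a n k s t := by
        rw [cH]
        congr 1
        apply Finset.filter_congr
        intro π _
        cases hbl : π.blocks with
        | nil =>
          simp only [List.getD_nil]
          constructor
          · rintro ⟨h0, -⟩; omega
          · rintro ⟨⟨hl, -, -⟩, -⟩; simp at hl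
        | cons x tl =>
          simp only [List.getD_cons_zero, List.length_cons, List.tail_cons]
          constructor
          · rintro ⟨hge, htl0, h1, h2, h3⟩
            have hnpk : ¬ pk x tl := by
              rintro ⟨-, hlt, -⟩
              omega
            have hpk : pk a (x :: tl) := by
              refine ⟨?_, ?_, ?_⟩
              · have := len_pos_of_getD htl0.symm ha
                simp only [List.length_cons]
                omega
              · simp only [List.getD_cons_zero]
                omega
              · rw [getD1_cons]
                omega
            refine ⟨hpk, by omega, ?_, ?_⟩
            · rw [spL_cons, if_neg hnpk]; omega
            · rw [hspL_cons, if_neg hnpk]; omega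
          · rintro ⟨hpk, h1, h2, h3⟩
            have htl0 : a = tl.getD 0 0 := by
              have := hpk.2.2
              rw [getD1_cons] at this
              exact this
            have hge : a + 1 ≤ x := by
              have := hpk.2.1
              simp only [List.getD_cons_zero] at this
              omega
            have hnpk : ¬ pk x tl := by
              rintro ⟨-, hlt, -⟩
              omega
            rw [spL_cons, if_neg hnpk] at h2
            rw [hspL_cons, if_neg hnpk] at h3
            exact ⟨hge, htl0, by omega, by omega, by omega⟩

open Finset MvPowerSeries

noncomputable def FaS (a : ℕ) : MvPowerSeries (Fin 4) ℚ := fun m =>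
  (cFa a (m 0) (m 1) (m 2) (m 3) : ℚ)

noncomputable def KS (a : ℕ) : MvPowerSeries (Fin 4) ℚ := fun m =>
  (cK a (m 0) (m 1) (m 2) (m 3) : ℚ)

noncomputable def HS (a : ℕ) : MvPowerSeries (Fin 4) ℚ := fun m =>
  (cH a (m 0) (m 1) (m 2) (m 3) : ℚ)

noncomputable def Dm (a b c d : ℕ) : Fin 4 →₀ ℕ :=
  Finsupp.single 0 a + Finsupp.single 1 b + Finsupp.single 2 c + Finsupp.single 3 d

lemma Dm_0 (a b c d : ℕ) : Dm a b c d 0 = a := by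
  simp [Dm, Finsupp.single_apply]
lemma Dm_1 (a b c d : ℕ) : Dm a b c d 1 = b := by
  simp [Dm, Finsupp.single_apply]
lemma Dm_2 (a b c d : ℕ) : Dm a b c d 2 = c := by
  simp [Dm, Finsupp.single_apply]
lemma Dm_3 (a b c d : ℕ) : Dm a b c d 3 = d := by
  simp [Dm, Finsupp.single_apply]

lemma Dm_le {a b c d : ℕ} {m : Fin 4 →₀ ℕ} :
    Dm a b c d ≤ m ↔ a ≤ m 0 ∧ b ≤ m 1 ∧ c ≤ m 2 ∧ d ≤ m 3 := by
  rw [Finsupp.le_def]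
  constructor
  · intro h
    refine ⟨?_, ?_, ?_, ?_⟩
    · have := h 0; rwa [Dm_0] at this
    · have := h 1; rwa [Dm_1] at this
    · have := h 2; rwa [Dm_2] at this
    · have := h 3; rwa [Dm_3] at this
  · rintro ⟨h0, h1, h2, h3⟩ i
    fin_cases i
    · show Dm a b c d 0 ≤ m 0; rw [Dm_0]; exact h0
    · show Dm a b c d 1 ≤ m 1; rw [Dm_1]; exact h1
    · show Dm a b c d 2 ≤ m 2; rw [Dm_2]; exact h2
    · show Dm a b c d 3 ≤ m 3; rw [Dm_3]; exact h3

lemma sub_Dm_0 (a b c d : ℕ) (m : Fin 4 →₀ ℕ) : (m - Dm a b c d) 0 = m 0 - a := by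
  rw [Finsupp.tsub_apply, Dm_0]
lemma sub_Dm_1 (a b c d : ℕ) (m : Fin 4 →₀ ℕ) : (m - Dm a b c d) 1 = m 1 - b := by
  rw [Finsupp.tsub_apply, Dm_1]
lemma sub_Dm_2 (a b c d : ℕ) (m : Fin 4 →₀ ℕ) : (m - Dm a b c d) 2 = m 2 - c := by
  rw [Finsupp.tsub_apply, Dm_2]
lemma sub_Dm_3 (a b c d : ℕ) (m : Fin 4 →₀ ℕ) : (m - Dm a b c d) 3 = m 3 - d := by
  rw [Finsupp.tsub_apply, Dm_3]

lemma monXy (a : ℕ) : (Xv 0)^a * Xv 1 = MvPowerSeries.monomial (Dm a 1 0 0) 1 := by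
  unfold Xv
  rw [MvPowerSeries.X_pow_eq, MvPowerSeries.X_def, MvPowerSeries.monomial_mul_monomial, one_mul]
  congr 1
  simp [Dm]

lemma monX : Xv 0 = MvPowerSeries.monomial (Dm 1 0 0 0) 1 := by
  unfold Xv
  rw [MvPowerSeries.X_def]
  congr 1
  simp [Dm]

lemma monHX : Xv 3 * Xv 0 = MvPowerSeries.monomial (Dm 1 0 0 1) 1 := by
  unfold Xv
  rw [MvPowerSeries.X_def, MvPowerSeries.X_def, MvPowerSeries.monomial_mul_monomial, one_mul]
  refine congrArg (fun d => MvPowerSeries.monomial d 1) ?_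
  ext i
  fin_cases i <;> simp [Dm, Finsupp.single_apply]

lemma monQ (a : ℕ) :
    Xv 2 * Xv 3 * (Xv 0)^(a+1) * Xv 1 = MvPowerSeries.monomial (Dm (a+1) 1 1 1) 1 := by
  unfold Xv
  rw [MvPowerSeries.X_pow_eq, MvPowerSeries.X_def, MvPowerSeries.X_def, MvPowerSeries.X_def,
    MvPowerSeries.monomial_mul_monomial, MvPowerSeries.monomial_mul_monomial,
    MvPowerSeries.monomial_mul_monomial, one_mul, one_mul, one_mul]
  refine congrArg (fun d => MvPowerSeries.monomial d 1) ?_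
  ext i
  fin_cases i <;> simp [Dm, Finsupp.single_apply]

lemma coeff_mono_mul (d m : Fin 4 →₀ ℕ) (ψ : MvPowerSeries (Fin 4) ℚ) :
    MvPowerSeries.coeff m (MvPowerSeries.monomial d 1 * ψ) =
      if d ≤ m then MvPowerSeries.coeff (m - d) ψ else 0 := by
  rw [MvPowerSeries.coeff_monomial_mul]
  split <;> simp

lemma coeff_FaS (a : ℕ) (m : Fin 4 →₀ ℕ) :
    MvPowerSeries.coeff m (FaS a) = (cFa a (m 0) (m 1) (m 2) (m 3) : ℚ) := rfl
lemma coeff_KS (a : ℕ) (m : Fin 4 →₀ ℕ) :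
    MvPowerSeries.coeff m (KS a) = (cK a (m 0) (m 1) (m 2) (m 3) : ℚ) := rfl
lemma coeff_HS (a : ℕ) (m : Fin 4 →₀ ℕ) :
    MvPowerSeries.coeff m (HS a) = (cH a (m 0) (m 1) (m 2) (m 3) : ℚ) := rfl
lemma coeff_Fhsp (m : Fin 4 →₀ ℕ) :
    MvPowerSeries.coeff m Fhsp = (cF (m 0) (m 1) (m 2) (m 3) : ℚ) := rfl

lemma S2 (a : ℕ) (ha : 0 < a) :
    FaS a + (Xv 0)^a * Xv 1 * KS a = (Xv 0)^a * Xv 1 * Fhsp + (Xv 0)^a * Xv 1 * HS a := by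
  rw [monXy]
  apply MvPowerSeries.ext
  intro m
  rw [map_add, map_add, coeff_mono_mul, coeff_mono_mul, coeff_mono_mul, coeff_FaS]
  by_cases hd : Dm a 1 0 0 ≤ m
  · rw [if_pos hd, if_pos hd, if_pos hd, coeff_KS, coeff_Fhsp, coeff_HS,
      sub_Dm_0, sub_Dm_1, sub_Dm_2, sub_Dm_3]
    simp only [Nat.sub_zero]
    obtain ⟨hle0, hle1, -, -⟩ := Dm_le.1 hd
    have key := N2 a (m 0 - a) (m 1 - 1) (m 2) (m 3) ha
    rw [show a + (m 0 - a) = m 0 by omega, show (m 1 - 1) + 1 = m 1 by omega] at key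
    exact_mod_cast key
  · rw [if_neg hd, if_neg hd, if_neg hd]
    have hfail : ¬ (a ≤ m 0 ∧ 1 ≤ m 1 ∧ 0 ≤ m 2 ∧ 0 ≤ m 3) := fun hh => hd (Dm_le.2 hh)
    have h0 : cFa a (m 0) (m 1) (m 2) (m 3) = 0 := cFa_zero _ _ _ _ _ ha (by omega)
    rw [h0]
    simp

lemma S3 (a : ℕ) (ha : 0 < a) :
    KS a = Xv 0 * KS a + (Xv 0)^(a+1) * Xv 1 * FaS a := by
  rw [monXy, monX]
  apply MvPowerSeries.ext
  intro m
  rw [map_add, coeff_mono_mul, coeff_mono_mul, coeff_KS]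
  rcases Nat.eq_zero_or_pos (m 0) with h0 | h0
  · rw [if_neg (fun hle => by have := (Dm_le.1 hle).1; omega),
      if_neg (fun hle => by have := (Dm_le.1 hle).1; omega)]
    rw [cK_zero a _ _ _ _ (by omega)]
    simp
  · have hd1 : Dm 1 0 0 0 ≤ m := Dm_le.2 ⟨h0, by omega, by omega, by omega⟩
    rw [if_pos hd1, coeff_KS, sub_Dm_0, sub_Dm_1, sub_Dm_2, sub_Dm_3]
    simp only [Nat.sub_zero]
    by_cases hg : Dm (a+1) 1 0 0 ≤ m
    · rw [if_pos hg, coeff_FaS, sub_Dm_0, sub_Dm_1, sub_Dm_2, sub_Dm_3]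
      simp only [Nat.sub_zero]
      obtain ⟨hga, hgk, -, -⟩ := Dm_le.1 hg
      have e1 := N3b a (m 0 - 1) (m 1) (m 2) (m 3) ha
      rw [show (m 0 - 1) + 1 = m 0 by omega] at e1
      have e2 := N3a a (m 0 - (a+1)) (m 1 - 1) (m 2) (m 3) ha
      rw [show (a+1) + (m 0 - (a+1)) = m 0 by omega,
        show (m 1 - 1) + 1 = m 1 by omega] at e2
      have key := cK_split a (m 0) (m 1) (m 2) (m 3)
      rw [e1, e2, Nat.add_comm] at key
      exact_mod_cast key
    · rw [if_neg hg]
      have hfail : ¬ (a+1 ≤ m 0 ∧ 1 ≤ m 1 ∧ 0 ≤ m 2 ∧ 0 ≤ m 3) := fun hh => hg (Dm_le.2 hh)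
      have hez : cK a (m 0) (m 1) (m 2) (m 3) = 0 := cK_zero a _ _ _ _ (by omega)
      have hez2 : cK a (m 0 - 1) (m 1) (m 2) (m 3) = 0 := cK_zero a _ _ _ _ (by omega)
      rw [hez, hez2]
      simp

lemma S4 (a : ℕ) (ha : 0 < a) :
    HS a = Xv 3 * Xv 0 * HS a + Xv 2 * Xv 3 * (Xv 0)^(a+1) * Xv 1 * FaS a := by
  rw [monHX, monQ]
  apply MvPowerSeries.ext
  intro m
  rw [map_add, coeff_mono_mul, coeff_mono_mul, coeff_HS]
  by_cases h0 : 1 ≤ m 0 ∧ 1 ≤ m 3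
  · have hd1 : Dm 1 0 0 1 ≤ m := Dm_le.2 ⟨h0.1, by omega, by omega, h0.2⟩
    rw [if_pos hd1, coeff_HS, sub_Dm_0, sub_Dm_1, sub_Dm_2, sub_Dm_3]
    simp only [Nat.sub_zero]
    by_cases hg : Dm (a+1) 1 1 1 ≤ m
    · rw [if_pos hg, coeff_FaS, sub_Dm_0, sub_Dm_1, sub_Dm_2, sub_Dm_3]
      obtain ⟨hga, hgk, hgs, hgt⟩ := Dm_le.1 hg
      have e1 := N4b a (m 0 - 1) (m 1) (m 2) (m 3 - 1) ha
      rw [show (m 0 - 1) + 1 = m 0 by omega, show (m 3 - 1) + 1 = m 3 by omega] at e1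
      have e2 := N4a a (m 0 - (a+1)) (m 1 - 1) (m 2 - 1) (m 3 - 1) ha
      rw [show (a+1) + (m 0 - (a+1)) = m 0 by omega,
        show (m 1 - 1) + 1 = m 1 by omega,
        show (m 2 - 1) + 1 = m 2 by omega,
        show (m 3 - 1) + 1 = m 3 by omega] at e2
      have key := cH_split a (m 0) (m 1) (m 2) (m 3)
      rw [e1, e2, Nat.add_comm] at key
      exact_mod_cast key
    · rw [if_neg hg]
      have hfail : ¬ (a+1 ≤ m 0 ∧ 1 ≤ m 1 ∧ 1 ≤ m 2 ∧ 1 ≤ m 3) := fun hh => hg (Dm_le.2 hh)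
      have hez : cH a (m 0) (m 1) (m 2) (m 3) = 0 := cH_zero a _ _ _ _ (by omega)
      have hez2 : cH a (m 0 - 1) (m 1) (m 2) (m 3 - 1) = 0 := cH_zero a _ _ _ _ (by omega)
      rw [hez, hez2]
      simp
  · rw [if_neg (fun hle => by have h := Dm_le.1 hle; omega),
      if_neg (fun hle => by have h := Dm_le.1 hle; omega)]
    rw [cH_zero a _ _ _ _ (by omega)]
    simp

lemma constC_sub_X0 : MvPowerSeries.constantCoeff (1 - Xv 0) ≠ 0 := by
  rw [map_sub, map_one, MvPowerSeries.constantCoeff_X]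
  norm_num

lemma constC_sub_X3X0 : MvPowerSeries.constantCoeff (1 - Xv 3 * Xv 0) ≠ 0 := by
  rw [map_sub, map_one, map_mul, MvPowerSeries.constantCoeff_X,
    MvPowerSeries.constantCoeff_X]
  norm_num

lemma constC_Ahsp (a : ℕ) : MvPowerSeries.constantCoeff (Ahsp a) ≠ 0 := by
  rw [Ahsp, map_sub, map_one, map_mul, map_mul, map_pow, map_pow,
    MvPowerSeries.constantCoeff_X, MvPowerSeries.constantCoeff_X]
  simp

lemma hMain (a : ℕ) (ha : 0 < a) : Ahsp a * FaS a = (Xv 0)^a * Xv 1 * Fhsp := by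
  have e1 := S2 a ha
  have e2 := S3 a ha
  have e3 := S4 a ha
  have e4 : (1 - Xv 0) * (1 - Xv 0)⁻¹ = 1 :=
    MvPowerSeries.mul_inv_cancel _ constC_sub_X0
  have e5 : (1 - Xv 3 * Xv 0) * (1 - Xv 3 * Xv 0)⁻¹ = 1 :=
    MvPowerSeries.mul_inv_cancel _ constC_sub_X3X0
  rw [Ahsp]
  linear_combination e1 - (Xv 0)^a * Xv 1 * (1 - Xv 0)⁻¹ * e2
    + (Xv 0)^a * Xv 1 * KS a * e4
    + (Xv 0)^a * Xv 1 * (1 - Xv 3 * Xv 0)⁻¹ * e3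
    - (Xv 0)^a * Xv 1 * HS a * e5

lemma hFa (a : ℕ) (ha : 0 < a) :
    FaS a = Fhsp * ((Xv 0)^a * Xv 1 * (Ahsp a)⁻¹) := by
  have hmul : Ahsp a * (Ahsp a)⁻¹ = 1 :=
    MvPowerSeries.mul_inv_cancel _ (constC_Ahsp a)
  linear_combination (Ahsp a)⁻¹ * hMain a ha - FaS a * hmul

lemma S1 (m : Fin 4 →₀ ℕ) :
    MvPowerSeries.coeff m Fhsp = (if m = 0 then 1 else 0) +
      ∑ a ∈ Finset.Icc 1 (m 0), MvPowerSeries.coeff m (FaS a) := by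
  have hiff : (m = 0) ↔ (m 0 = 0 ∧ m 1 = 0 ∧ m 2 = 0 ∧ m 3 = 0) := by
    constructor
    · rintro rfl; simp
    · rintro ⟨h0, h1, h2, h3⟩
      ext i
      fin_cases i
      · simpa using h0
      · simpa using h1
      · simpa using h2
      · simpa using h3
  rw [coeff_Fhsp]
  have key := cF_split (m 0) (m 1) (m 2) (m 3)
  rw [key]
  push_cast
  congr 1
  simp only [hiff]


/-- Theorem 1 of the paper: `F·(1 − Σ_{a≥1} x^a y A_a⁻¹) = 1`, i.e.
`F(x,y,q,h) = 1/(1 − Σ_{a≥1} x^a y/(1 − y²x^{2a+1}(qh/(1−hx) − 1/(1−x))))`. -/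
theorem hsp_generating_function : Fhsp * (1 - Shsp) = 1 := by
  apply MvPowerSeries.ext
  intro m
  rw [mul_sub, mul_one, map_sub]
  have hS : MvPowerSeries.coeff m (Fhsp * Shsp)
      = ∑ a ∈ Finset.Icc 1 (m 0), MvPowerSeries.coeff m (FaS a) := by
    rw [MvPowerSeries.coeff_mul]
    have hrow : ∀ p ∈ Finset.HasAntidiagonal.antidiagonal m,
        MvPowerSeries.coeff p.1 Fhsp * MvPowerSeries.coeff p.2 Shsp
        = ∑ a ∈ Finset.Icc 1 (m 0),
            MvPowerSeries.coeff p.1 Fhsp *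
              MvPowerSeries.coeff p.2 ((Xv 0)^a * Xv 1 * (Ahsp a)⁻¹) := by
      intro p hp
      have hp2 : p.2 0 ≤ m 0 := by
        have hpe := Finset.HasAntidiagonal.mem_antidiagonal.1 hp
        have := DFunLike.congr_fun hpe 0
        rw [Finsupp.add_apply] at this
        omega
      have hsh : MvPowerSeries.coeff p.2 Shsp
          = ∑ a ∈ Finset.Icc 1 (p.2 0),
              MvPowerSeries.coeff p.2 ((Xv 0)^a * Xv 1 * (Ahsp a)⁻¹) := rfl
      rw [hsh, Finset.sum_subset (Finset.Icc_subset_Icc_right hp2) ?van, Finset.mul_sum]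
      case van =>
        intro a haI ha2
        have haa : p.2 0 < a := by
          rw [Finset.mem_Icc] at haI ha2
          omega
        rw [monXy, coeff_mono_mul, if_neg]
        intro hle
        have := (Dm_le.1 hle).1
        omega
    rw [Finset.sum_congr rfl hrow, Finset.sum_comm]
    refine Finset.sum_congr rfl (fun a haI => ?_)
    rw [← MvPowerSeries.coeff_mul, ← hFa a (Finset.mem_Icc.1 haI).1]
  rw [hS, S1 m, MvPowerSeries.coeff_one]
  ring
end

section
/- In the ring of formal power series ℚ[[x]], one has (1−2x)²·(1−x³)·(Σ_{n≥0} hsp(n)·xⁿ) = x⁴. -/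
/-- `hsp(n)`: the total sum of heights of symmetric peaks over all compositions of `n`. -/
def hspN (n : ℕ) : ℕ := ∑ c : Composition n, hspL c.blocks

namespace HspAux

/-! ### Lists of compositions -/

def compsL : ℕ → List (List ℕ)
  | 0 => [[]]
  | (n+1) => (List.range (n+1)).attach.flatMap
      (fun m => (compsL m.1).map (fun L => (n + 1 - m.1) :: L))
  decreasing_by exact List.mem_range.mp m.2

lemma sum_map_flatMap {α β γ : Type*} [AddCommMonoid γ] (l : List α) (g : α → List β) (f : β → γ) :
    (((l.flatMap g)).map f).sum = (l.map (fun x => ((g x).map f).sum)).sum := by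
  induction l with
  | nil => simp
  | cons a l ih => simp [List.flatMap_cons, ih]

lemma list_sum_range {γ : Type*} [AddCommMonoid γ] (n : ℕ) (f : ℕ → γ) :
    ((List.range n).map f).sum = ∑ i ∈ Finset.range n, f i := rfl

lemma sum_map_compsL_succ {γ : Type*} [AddCommMonoid γ] (n : ℕ) (f : List ℕ → γ) :
    ((compsL (n+1)).map f).sum
      = ∑ m ∈ Finset.range (n+1), ((compsL m).map (fun L => f ((n + 1 - m) :: L))).sum := by
  rw [compsL, sum_map_flatMap, ← list_sum_range]
  simp [List.map_attach_eq_pmap, List.pmap_eq_map, List.map_map, Function.comp_def]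

lemma mem_compsL : ∀ (n : ℕ) (L : List ℕ), L ∈ compsL n ↔ L.sum = n ∧ ∀ x ∈ L, 0 < x := by
  intro n
  induction n using Nat.strong_induction_on with
  | _ n ih =>
    intro L
    match n with
    | 0 =>
      simp only [compsL, List.mem_singleton]
      constructor
      · rintro rfl; simp
      · rintro ⟨hs, hp⟩
        cases L with
        | nil => rfl
        | cons a L =>
          exfalso
          have := hp a (by simp)
          simp at hs; omega
    | (n+1) =>
      rw [compsL]
      simp only [List.mem_flatMap, List.mem_map, List.mem_attach]
      constructor
      · rintro ⟨⟨m, hm⟩, -, L', hL', rfl⟩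
        dsimp only at hL' ⊢
        rw [List.mem_range] at hm
        obtain ⟨hs, hp⟩ := (ih m hm L').mp hL'
        constructor
        · simp [hs]; omega
        · intro x hx
          rcases List.mem_cons.mp hx with rfl | h
          · omega
          · exact hp x h
      · rintro ⟨hs, hp⟩
        cases L with
        | nil => simp at hs
        | cons a L' =>
          have ha : 0 < a := hp a (by simp)
          simp only [List.sum_cons] at hs
          have hm : L'.sum < n + 1 := by omega
          refine ⟨⟨L'.sum, List.mem_range.mpr hm⟩, trivial, L', ?_, ?_⟩
          · exact (ih _ hm L').mpr ⟨rfl, fun x hx => hp x (List.mem_cons_of_mem _ hx)⟩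
          · dsimp only; congr 1; omega

lemma nodup_compsL : ∀ (n : ℕ), (compsL n).Nodup := by
  intro n
  induction n using Nat.strong_induction_on with
  | _ n ih =>
    match n with
    | 0 => simp [compsL]
    | (n+1) =>
      rw [compsL]
      rw [List.nodup_flatMap]
      constructor
      · rintro ⟨m, hm⟩ -
        exact (ih m (List.mem_range.mp hm)).map (fun a b h => by simpa using h)
      · refine ((List.nodup_range (n := n+1)).attach).pairwise_of_forall_ne ?_
        rintro ⟨m₁, hm₁⟩ - ⟨m₂, hm₂⟩ - hne
        dsimp only [Function.onFun]
        rw [List.mem_range] at hm₁ hm₂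
        intro x hx₁ hx₂
        simp only [List.mem_map] at hx₁ hx₂
        obtain ⟨L₁, -, rfl⟩ := hx₁
        obtain ⟨L₂, -, he⟩ := hx₂
        apply hne
        have h2 : n + 1 - m₁ = n + 1 - m₂ := by
          exact ((List.cons.injEq _ _ _ _).mp he.symm).1
        ext
        dsimp only
        omega

lemma hspN_eq (n : ℕ) : hspN n = ((compsL n).map hspL).sum := by
  rw [hspN, ← List.sum_toFinset _ (nodup_compsL n)]
  have himg : (compsL n).toFinset = Finset.univ.image (fun c : Composition n => c.blocks) := by
    ext L
    simp only [List.mem_toFinset, Finset.mem_image, Finset.mem_univ, true_and, mem_compsL]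
    constructor
    · rintro ⟨hs, hp⟩
      exact ⟨⟨L, fun {i} hi => hp i hi, hs⟩, rfl⟩
    · rintro ⟨c, rfl⟩
      exact ⟨c.blocks_sum, fun x hx => c.blocks_pos hx⟩
  rw [himg, Finset.sum_image (fun a _ b _ h => Composition.ext h)]

/-! ### The local peak statistic -/

def pk (a : ℕ) (L : List ℕ) : ℕ :=
  if 2 ≤ L.length ∧ a < L.getD 0 0 ∧ a = L.getD 1 0 then L.getD 0 0 - a else 0

lemma hspL_eq_sum (M : List ℕ) : hspL M = ∑ i ∈ Finset.range M.length,
    (if i + 2 < M.length ∧ M.getD i 0 < M.getD (i+1) 0 ∧ M.getD i 0 = M.getD (i+2) 0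
      then M.getD (i+1) 0 - M.getD i 0 else 0) := by
  rw [hspL, symPeakIdx, Finset.sum_filter]

lemma hspL_cons (a : ℕ) (L : List ℕ) : hspL (a :: L) = pk a L + hspL L := by
  rw [hspL_eq_sum, hspL_eq_sum, List.length_cons, Finset.sum_range_succ']
  have h1 : ∀ i, (a :: L).getD (i+1) 0 = L.getD i 0 := fun i => rfl
  have h0 : (a :: L).getD 0 0 = a := rfl
  simp only [h1, h0]
  rw [add_comm]
  congr 1
  · simp only [pk]
    congr 1
    simp only [eq_iff_iff]
    omega
  · apply Finset.sum_congr rfl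
    intro i _
    congr 1
    simp only [eq_iff_iff]
    omega

/-! ### Counting -/

def c0 (n : ℕ) : ℕ := (compsL n).length

lemma compsL_zero : compsL 0 = [[]] := by rw [compsL]

lemma c0_zero : c0 0 = 1 := by rw [c0, compsL_zero]; rfl

lemma length_eq_sum_map {α : Type*} (l : List α) : l.length = (l.map (fun _ => 1)).sum := by
  induction l with
  | nil => rfl
  | cons a l ih =>
    simp only [List.length_cons, List.map_cons, List.sum_cons, ih]
    omega

lemma c0_succ (n : ℕ) : c0 (n+1) = ∑ m ∈ Finset.range (n+1), c0 m := by
  rw [c0, length_eq_sum_map, sum_map_compsL_succ]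
  apply Finset.sum_congr rfl
  intro m _
  rw [c0, length_eq_sum_map]

lemma c0_one : c0 1 = 1 := by rw [c0_succ, Finset.sum_range_one, c0_zero]

lemma c0_two_mul (n : ℕ) : c0 (n+2) = 2 * c0 (n+1) := by
  rw [c0_succ (n+1), Finset.sum_range_succ, ← c0_succ n, two_mul]

lemma sum_map_const {α : Type*} (l : List α) (x : ℕ) : (l.map (fun _ => x)).sum = x * l.length := by
  induction l with
  | nil => simp
  | cons a l ih => simp [ih, Nat.mul_succ]; ring

/-- Count of compositions of `m` with prescribed first part `a ≥ 1`, weighted by `x`. -/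
lemma count_first (a m x : ℕ) (ha : 1 ≤ a) :
    ((compsL m).map (fun L => if a = L.getD 0 0 then x else 0)).sum
      = if a ≤ m then x * c0 (m - a) else 0 := by
  match m with
  | 0 =>
    have h0 : ¬ (a ≤ 0) := by omega
    simp only [h0, if_false, compsL_zero]
    show (if a = List.getD [] 0 0 then x else 0) + 0 = 0
    rw [if_neg (by simp; omega)]
  | (m+1) =>
    rw [sum_map_compsL_succ]
    have hterm : ∀ m' ∈ Finset.range (m+1),
        ((compsL m').map (fun L => if a = ((m + 1 - m') :: L).getD 0 0 then x else 0)).sum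
          = if a = m + 1 - m' then x * c0 m' else 0 := by
      intro m' _
      have : ∀ L : List ℕ, ((m + 1 - m') :: L).getD 0 0 = m + 1 - m' := fun L => rfl
      simp only [this]
      by_cases h : a = m + 1 - m'
      · simp only [h, if_true, sum_map_const, c0]
      · simp only [h, if_false]
        induction (compsL m') with
        | nil => rfl
        | cons b l ih => simpa using ih
    rw [Finset.sum_congr rfl hterm]
    by_cases ham : a ≤ m + 1
    · rw [Finset.sum_eq_single (m + 1 - a)]
      · rw [if_pos ham, if_pos (show a = m + 1 - (m + 1 - a) by omega)]
      · intro b hb hne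
        rw [Finset.mem_range] at hb
        rw [if_neg (by omega)]
      · intro h
        exfalso
        exact h (Finset.mem_range.mpr (by omega))
    · rw [if_neg ham, Finset.sum_eq_zero]
      intro b hb
      rw [Finset.mem_range] at hb
      rw [if_neg (by omega)]

/-! ### Peak sums -/

def W (K : ℕ) : ℕ := ∑ k ∈ Finset.range (K+1), (K - k) * c0 k

lemma W_zero : W 0 = 0 := by simp [W]

def Ppk (a m : ℕ) : ℕ := ((compsL m).map (pk a)).sum

lemma pk_cons (a b : ℕ) (L : List ℕ) (ha : 1 ≤ a) :
    pk a (b :: L) = if a = L.getD 0 0 then (if a < b then b - a else 0) else 0 := by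
  cases L with
  | nil =>
    simp only [pk, List.length_cons, List.length_nil, List.getD_cons_zero, List.getD_cons_succ,
      List.getD_nil]
    simp [show a ≠ 0 by omega]
  | cons c L' =>
    simp only [pk, List.length_cons, List.getD_cons_zero, List.getD_cons_succ]
    split_ifs <;> omega

lemma Ppk_eq (a m : ℕ) (ha : 1 ≤ a) : Ppk a m = W (m - 2 * a) := by
  match m with
  | 0 =>
    rw [Ppk, compsL_zero, show (0 : ℕ) - 2 * a = 0 by omega, W_zero]
    show pk a [] + 0 = 0
    simp [pk]
  | (m+1) =>
    rw [Ppk, sum_map_compsL_succ]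
    have hterm : ∀ m' ∈ Finset.range (m+1),
        ((compsL m').map (fun L => pk a ((m + 1 - m') :: L))).sum
          = if a ≤ m' ∧ a < m + 1 - m' then ((m + 1 - m') - a) * c0 (m' - a) else 0 := by
      intro m' hm'
      have h1 : ∀ L : List ℕ, pk a ((m + 1 - m') :: L)
          = if a = L.getD 0 0 then (if a < m + 1 - m' then (m + 1 - m') - a else 0) else 0 :=
        fun L => pk_cons a _ L ha
      simp only [h1]
      rw [count_first a m' _ ha]
      by_cases h2 : a ≤ m'
      · by_cases h3 : a < m + 1 - m'
        · rw [if_pos h2, if_pos h3, if_pos ⟨h2, h3⟩]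
        · rw [if_pos h2, if_neg h3, if_neg (by tauto), zero_mul]
      · rw [if_neg h2, if_neg (by tauto)]
    rw [Finset.sum_congr rfl hterm]
    by_cases ham : a ≤ m
    · set K := m + 1 - 2 * a with hK
      have hsplit := Finset.sum_range_add
        (fun x => if a ≤ x ∧ a < m + 1 - x then (m + 1 - x - a) * c0 (x - a) else 0) a (m + 1 - a)
      rw [show a + (m + 1 - a) = m + 1 from by omega] at hsplit
      rw [hsplit]
      have hz : (∑ x ∈ Finset.range a,
          if a ≤ x ∧ a < m + 1 - x then (m + 1 - x - a) * c0 (x - a) else 0) = 0 := by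
        apply Finset.sum_eq_zero
        intro x hx
        rw [Finset.mem_range] at hx
        rw [if_neg (by omega)]
      rw [hz, zero_add]
      have hpt : ∀ k ∈ Finset.range (m + 1 - a),
          (if a ≤ a + k ∧ a < m + 1 - (a + k) then (m + 1 - (a + k) - a) * c0 (a + k - a) else 0)
            = (K - k) * c0 k := by
        intro k _
        by_cases h : a < m + 1 - (a + k)
        · rw [if_pos ⟨by omega, h⟩, show a + k - a = k by omega, show m + 1 - (a + k) - a = K - k by omega]
        · rw [if_neg (by tauto), show K - k = 0 by omega, zero_mul]
      rw [Finset.sum_congr rfl hpt, W]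
      refine (Finset.sum_subset ?_ ?_).symm
      · intro x hx
        rw [Finset.mem_range] at hx ⊢
        omega
      · intro k _ hk
        rw [Finset.mem_range] at hk
        rw [show K - k = 0 by omega, zero_mul]
    · rw [show m + 1 - 2 * a = 0 by omega, W_zero]
      apply Finset.sum_eq_zero
      intro b hb
      rw [Finset.mem_range] at hb
      rw [if_neg (by omega)]

/-! ### The series `T` -/

def T (n : ℕ) : ℕ := ∑ m ∈ Finset.range n, Ppk (n - m) m

lemma hspN_zero : hspN 0 = 0 := by
  rw [hspN_eq, compsL_zero]
  show hspL [] + 0 = 0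
  rw [hspL_eq_sum]
  rfl

lemma hspN_rec (n : ℕ) :
    hspN (n+1) = (∑ m ∈ Finset.range (n+1), hspN m) + T (n+1) := by
  rw [hspN_eq, sum_map_compsL_succ]
  have h : ∀ m ∈ Finset.range (n+1),
      ((compsL m).map (fun L => hspL ((n + 1 - m) :: L))).sum = Ppk (n + 1 - m) m + hspN m := by
    intro m _
    simp only [hspL_cons]
    rw [List.sum_map_add, hspN_eq]
    rfl
  rw [Finset.sum_congr rfl h, Finset.sum_add_distrib, T, add_comm]

lemma T_reflect (n : ℕ) : T n = ∑ j ∈ Finset.range n, W (n - (3*j+3)) := by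
  rw [T]
  have h1 : ∀ m ∈ Finset.range n, Ppk (n - m) m = W (m - 2 * (n - m)) := by
    intro m hm
    rw [Finset.mem_range] at hm
    exact Ppk_eq (n - m) m (by omega)
  rw [Finset.sum_congr rfl h1,
    ← Finset.sum_range_reflect (fun m => W (m - 2 * (n - m))) n]
  apply Finset.sum_congr rfl
  intro j hj
  rw [Finset.mem_range] at hj
  congr 1
  omega

lemma T_zero : T 0 = 0 := rfl

lemma T_one : T 1 = 0 := by
  rw [T_reflect, Finset.sum_range_one, show 1 - (3*0+3) = 0 by omega, W_zero]

lemma T_two : T 2 = 0 := by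
  rw [T_reflect]
  norm_num [Finset.sum_range_succ, W_zero]

lemma T_rec (n : ℕ) : T (n+3) = W n + T n := by
  have hL : T (n+3) = ∑ j ∈ Finset.range (n+3), W (n - 3*j) := by
    rw [T_reflect]
    exact Finset.sum_congr rfl (fun j _ => by congr 1; omega)
  rw [hL, Finset.sum_range_succ', Nat.mul_zero, Nat.sub_zero, add_comm]
  congr 1
  have h1 : ∑ j ∈ Finset.range n, W (n - 3*(j+1))
      = ∑ j ∈ Finset.range (n+2), W (n - 3*(j+1)) := by
    apply Finset.sum_subset
    · intro x hx
      rw [Finset.mem_range] at hx ⊢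
      omega
    · intro x _ hx
      rw [Finset.mem_range] at hx
      rw [show n - 3*(x+1) = 0 from by omega, W_zero]
  rw [← h1, T_reflect]
  apply Finset.sum_congr rfl
  intro j _
  rw [show n - 3*(j+1) = n - (3*j+3) from by omega]

lemma key_step (n : ℕ) : hspN (n+2) + T (n+1) = 2 * hspN (n+1) + T (n+2) := by
  have r1 : hspN (n+2) = (∑ m ∈ Finset.range (n+2), hspN m) + T (n+2) := hspN_rec (n+1)
  have r2 := hspN_rec n
  rw [Finset.sum_range_succ] at r1
  omega

lemma W_eq (n : ℕ) : W n = ∑ k ∈ Finset.range (n+1), k * c0 (n - k) := by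
  rw [W, ← Finset.sum_range_reflect (fun k => k * c0 (n - k)) (n+1)]
  apply Finset.sum_congr rfl
  intro j hj
  rw [Finset.mem_range] at hj
  rw [show n + 1 - 1 - j = n - j from by omega, show n - (n - j) = j from by omega]

/-! ### Power series -/

open PowerSeries

noncomputable def Hs : PowerSeries ℚ := PowerSeries.mk fun n => (hspN n : ℚ)
noncomputable def Ts : PowerSeries ℚ := PowerSeries.mk fun n => (T n : ℚ)
noncomputable def Ws : PowerSeries ℚ := PowerSeries.mk fun n => (W n : ℚ)
noncomputable def Cs : PowerSeries ℚ := PowerSeries.mk fun n => (c0 n : ℚ)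
noncomputable def Ns : PowerSeries ℚ := PowerSeries.mk fun n => (n : ℚ)

lemma coeff_X_pow_mul_of_lt (k n : ℕ) (h : n < k) (F : PowerSeries ℚ) :
    coeff n (X ^ k * F) = 0 := by
  rw [PowerSeries.coeff_mul]
  apply Finset.sum_eq_zero
  intro p hp
  rw [Finset.HasAntidiagonal.mem_antidiagonal] at hp
  rw [PowerSeries.coeff_X_pow, if_neg (by omega), zero_mul]

lemma R5 : (1 - 2 * X) * Cs = 1 - X := by
  have hrw : (1 - 2 * X) * Cs = Cs - (X * Cs + X * Cs) := by ring
  rw [hrw]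
  ext n
  simp only [map_sub, map_add]
  match n with
  | 0 => simp [Cs, c0_zero]
  | 1 =>
    simp only [PowerSeries.coeff_succ_X_mul, Cs, PowerSeries.coeff_mk,
      PowerSeries.coeff_one, PowerSeries.coeff_X, c0_zero, c0_one]
    norm_num
  | (n+2) =>
    simp only [PowerSeries.coeff_succ_X_mul, Cs, PowerSeries.coeff_mk,
      PowerSeries.coeff_one, PowerSeries.coeff_X, c0_two_mul n]
    push_cast
    norm_num
    ring

lemma R4 : (1 - X) * ((1 - X) * Ns) = X := by
  have hrw : (1 - X) * ((1 - X) * Ns) = Ns - (X * Ns + X * Ns) + X * (X * Ns) := by ring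
  rw [hrw]
  ext n
  simp only [map_sub, map_add]
  match n with
  | 0 => simp [Ns]
  | 1 =>
    simp only [PowerSeries.coeff_succ_X_mul]
    have h0 : (PowerSeries.coeff 0) (X * Ns) = 0 := by
      rw [PowerSeries.coeff_zero_eq_constantCoeff]
      simp
    rw [h0]
    simp [Ns, PowerSeries.coeff_X]
  | (n+2) =>
    simp only [PowerSeries.coeff_succ_X_mul, Ns, PowerSeries.coeff_mk, PowerSeries.coeff_X]
    push_cast
    norm_num
    ring

lemma R3 : Ws = Ns * Cs := by
  ext n
  rw [PowerSeries.coeff_mul, Finset.Nat.sum_antidiagonal_eq_sum_range_succ_mk]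
  simp only [Ws, Ns, Cs, PowerSeries.coeff_mk]
  rw [W_eq]
  push_cast
  rfl

lemma R2 : (1 - X ^ 3) * Ts = X ^ 3 * Ws := by
  have hrw : (1 - X ^ 3) * Ts = Ts - X ^ 3 * Ts := by ring
  rw [hrw]
  ext n
  simp only [map_sub]
  match n with
  | 0 =>
    rw [coeff_X_pow_mul_of_lt 3 0 (by omega), coeff_X_pow_mul_of_lt 3 0 (by omega)]
    simp [Ts, T_zero]
  | 1 =>
    rw [coeff_X_pow_mul_of_lt 3 1 (by omega), coeff_X_pow_mul_of_lt 3 1 (by omega)]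
    simp [Ts, T_one]
  | 2 =>
    rw [coeff_X_pow_mul_of_lt 3 2 (by omega), coeff_X_pow_mul_of_lt 3 2 (by omega)]
    simp [Ts, T_two]
  | (n+3) =>
    rw [PowerSeries.coeff_X_pow_mul Ts 3 n, PowerSeries.coeff_X_pow_mul Ws 3 n]
    simp only [Ts, Ws, PowerSeries.coeff_mk]
    have := T_rec n
    have hc : (T (n+3) : ℚ) = (W n : ℚ) + (T n : ℚ) := by exact_mod_cast this
    rw [hc]
    ring

lemma R1 : (1 - 2 * X) * Hs = (1 - X) * Ts := by
  have hrw1 : (1 - 2 * X) * Hs = Hs - (X * Hs + X * Hs) := by ring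
  have hrw2 : (1 - X) * Ts = Ts - X * Ts := by ring
  rw [hrw1, hrw2]
  ext n
  simp only [map_sub, map_add]
  match n with
  | 0 => simp [Hs, Ts, hspN_zero, T_zero]
  | 1 =>
    simp only [PowerSeries.coeff_succ_X_mul, Hs, Ts, PowerSeries.coeff_mk]
    have h1 : hspN 1 = 0 := by
      have := hspN_rec 0
      rw [Finset.sum_range_one] at this
      rw [this, hspN_zero, T_one]
    rw [h1, hspN_zero, T_zero, T_one]
    norm_num
  | (n+2) =>
    simp only [PowerSeries.coeff_succ_X_mul, Hs, Ts, PowerSeries.coeff_mk]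
    have := key_step n
    have hc : (hspN (n+2) : ℚ) + (T (n+1) : ℚ)
        = 2 * (hspN (n+1) : ℚ) + (T (n+2) : ℚ) := by exact_mod_cast this
    linarith

end HspAux

open PowerSeries in
/-- `(1−2x)²·(1−x³)·(Σ_{n≥0} hsp(n)·xⁿ) = x⁴` in `ℚ[[x]]`. -/
theorem hspN_generating_function :
    (1 - 2 * (X : PowerSeries ℚ))^2 * (1 - X^3) * PowerSeries.mk (fun n => (hspN n : ℚ))
      = X^4 := by
  have h : PowerSeries.mk (fun n => (hspN n : ℚ)) = HspAux.Hs := rfl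
  rw [h]
  have r1 := HspAux.R1
  have r2 := HspAux.R2
  have r3 := HspAux.R3
  have r4 := HspAux.R4
  have r5 := HspAux.R5
  linear_combination (1 - 2*X) * (1 - X^3) * r1 + (1 - 2*X) * (1 - X) * r2
    + (1 - 2*X) * (1 - X) * X^3 * r3 + (1 - X) * X^3 * HspAux.Ns * r5 + X^3 * r4
end

section
/- For all integers n ≥ 0 and k ≥ 4, hsp(n,k) = (k−2) · Σ_{m=2}^{n−k+1} Σ_{b=1}^{min{m−1, t}} C(n−2b−m−1, k−4)·(m−b), where t = ⌊(n−m−k+3)/2⌋, C(·,·) is the binomial coefficient, and empty sums are 0. -/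
open Finset

/-- `hsp(n,k)`: the total sum of heights of symmetric peaks over all compositions of `n`
with exactly `k` parts. -/
def hspNK (n k : ℕ) : ℕ :=
  ∑ c ∈ (Finset.univ : Finset (Composition n)).filter (fun c => c.length = k),
    hspL c.blocks

/-- Compositions of `N` with `j` parts, as a finset of lists. -/
def comps : ℕ → ℕ → Finset (List ℕ)
  | N, 0 => if N = 0 then {[]} else ∅
  | N, j+1 => (Finset.Icc 1 N).biUnion fun a => (comps (N-a) j).image (a :: ·)

lemma mem_comps {L : List ℕ} {N j : ℕ} :
    L ∈ comps N j ↔ L.length = j ∧ L.sum = N ∧ ∀ x ∈ L, 0 < x := by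
  induction j generalizing N L with
  | zero =>
    simp only [comps]
    split <;> rename_i h <;> cases L <;> simp_all <;> omega
  | succ j ih =>
    simp only [comps, Finset.mem_biUnion, Finset.mem_image, Finset.mem_Icc]
    constructor
    · rintro ⟨a, ⟨ha1, ha2⟩, M, hM, rfl⟩
      obtain ⟨h1, h2, h3⟩ := ih.1 hM
      refine ⟨by simp [h1], by simp [h2]; omega, ?_⟩
      intro x hx; rcases List.mem_cons.1 hx with rfl | hx
      · exact ha1
      · exact h3 x hx
    · rintro ⟨h1, h2, h3⟩
      cases L with
      | nil => simp at h1
      | cons a M =>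
        have hapos : 0 < a := h3 a (by simp)
        have hsum : M.sum = N - a := by simp at h2; omega
        refine ⟨a, ⟨hapos, by simp at h2; omega⟩, M, ih.2 ⟨by simpa using h1, hsum,
          fun x hx => h3 x (List.mem_cons_of_mem _ hx)⟩, rfl⟩

lemma sum_comps_succ {M : Type*} [AddCommMonoid M] (f : List ℕ → M) (N j : ℕ) :
    ∑ L ∈ comps N (j+1), f L = ∑ a ∈ Finset.Icc 1 N, ∑ L ∈ comps (N-a) j, f (a :: L) := by
  rw [comps, Finset.sum_biUnion]
  · refine Finset.sum_congr rfl fun a _ => ?_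
    rw [Finset.sum_image]
    intro x _ y _ h
    exact List.cons_injective h
  · intro a _ b _ hab
    simp only [Finset.disjoint_left, Finset.mem_image]
    rintro L ⟨x, _, rfl⟩ ⟨y, _, h⟩
    injection h.symm with h1 _
    exact hab h1

lemma card_comps_succ (N j : ℕ) :
    (comps N (j+1)).card = ∑ a ∈ Finset.Icc 1 N, (comps (N-a) j).card := by
  rw [Finset.card_eq_sum_ones, sum_comps_succ (fun _ => (1 : ℕ)) N j]
  exact Finset.sum_congr rfl fun a _ => (Finset.card_eq_sum_ones _).symm

lemma comps_eq_empty {N j : ℕ} (h : N < j) : comps N j = ∅ := by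
  ext L
  simp only [mem_comps, Finset.notMem_empty, iff_false]
  rintro ⟨h1, h2, h3⟩
  have : L.length ≤ L.sum := by
    clear h1 h2
    induction L with
    | nil => simp
    | cons a t iht =>
      simp only [List.length_cons, List.sum_cons]
      have := h3 a (by simp)
      have := iht (fun x hx => h3 x (List.mem_cons_of_mem _ hx))
      omega
  omega

lemma sum_range_choose' (M j : ℕ) : ∑ s ∈ Finset.range M, Nat.choose s j = Nat.choose M (j+1) := by
  induction M with
  | zero => simp
  | succ M ih =>
    rw [Finset.sum_range_succ, ih, Nat.choose_succ_succ]
    simp [Nat.succ_eq_add_one, Nat.add_comm]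

lemma sum_Icc_sub {M : Type*} [AddCommMonoid M] (f : ℕ → M) (N : ℕ) :
    ∑ a ∈ Finset.Icc 1 N, f (N - a) = ∑ s ∈ Finset.range N, f s := by
  refine Finset.sum_nbij' (fun a => N - a) (fun s => N - s) ?_ ?_ ?_ ?_ ?_
  · intro a ha; simp only [Finset.mem_Icc] at ha; simp only [Finset.mem_range]; omega
  · intro s hs; simp only [Finset.mem_range] at hs; simp only [Finset.mem_Icc]; omega
  · intro a ha; simp only [Finset.mem_Icc] at ha; omega
  · intro s hs; simp only [Finset.mem_range] at hs; omega
  · intro a _; rfl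

lemma card_comps {N : ℕ} (j : ℕ) (hN : 1 ≤ N) :
    (comps N (j+1)).card = Nat.choose (N-1) j := by
  induction j generalizing N with
  | zero =>
    have h1 : comps N 1 = {[N]} := by
      ext L
      simp only [mem_comps, Finset.mem_singleton]
      constructor
      · rintro ⟨h1, h2, h3⟩
        match L, h1 with
        | [a], _ => simp at h2; simp [h2]
      · rintro rfl; exact ⟨rfl, by simp, by simp; omega⟩
    rw [h1]
    simp
  | succ j ih =>
    rw [card_comps_succ, sum_Icc_sub (fun s => (comps s (j+1)).card)]
    obtain ⟨N', rfl⟩ : ∃ N', N = N' + 1 := ⟨N - 1, by omega⟩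
    rw [Finset.sum_range_succ']
    have h0 : (comps 0 (j+1)).card = 0 := by rw [comps_eq_empty (by omega)]; rfl
    rw [h0, add_zero]
    have h1 : ∀ s, (comps (s+1) (j+1)).card = Nat.choose s j := fun s => by
      rw [ih (by omega)]; simp
    simp only [h1]
    rw [sum_range_choose']
    simp

/-- peak contribution at index `i` -/
def gP (L : List ℕ) (i : ℕ) : ℕ :=
  if L.getD i 0 < L.getD (i+1) 0 ∧ L.getD i 0 = L.getD (i+2) 0
  then L.getD (i+1) 0 - L.getD i 0 else 0

def Fs (i N j : ℕ) : ℕ := ∑ L ∈ comps N j, gP L i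

def Es (N j : ℕ) : ℕ :=
  ∑ b ∈ Finset.Icc 1 N, ∑ m ∈ Finset.Icc 1 N,
    if b < m ∧ 2*b + m ≤ N then (m - b) * (comps (N - 2*b - m) (j-3)).card else 0

lemma hspL_eq (L : List ℕ) : hspL L = ∑ i ∈ Finset.range (L.length - 2), gP L i := by
  rw [hspL, symPeakIdx, Finset.sum_filter]
  rw [← Finset.sum_subset (Finset.range_subset_range.2 (by omega : L.length - 2 ≤ L.length))]
  · refine Finset.sum_congr rfl fun i hi => ?_
    have : i + 2 < L.length := by simp at hi; omega
    simp only [gP, this, true_and]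
  · intro i _ hi
    have : ¬ (i + 2 < L.length) := by simp at hi ⊢; omega
    simp [this]

lemma gP_cons (a : ℕ) (L : List ℕ) (i : ℕ) : gP (a :: L) (i+1) = gP L i := by
  simp [gP, List.getD_cons_succ]

lemma Fs_succ (i N j : ℕ) : Fs (i+1) N (j+1) = ∑ a ∈ Finset.Icc 1 N, Fs i (N-a) j := by
  rw [Fs, sum_comps_succ]
  exact Finset.sum_congr rfl fun a _ => Finset.sum_congr rfl fun L _ => gP_cons a L i

lemma Fs_zero (N j : ℕ) : Fs 0 N (j+3) = Es N (j+3) := by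
  rw [Fs, sum_comps_succ, Es]
  refine Finset.sum_congr rfl fun a ha => ?_
  simp only [Finset.mem_Icc] at ha
  rw [sum_comps_succ]
  rw [← Finset.sum_subset (Finset.Icc_subset_Icc_right (by omega : N - a ≤ N))]
  · refine Finset.sum_congr rfl fun m hm => ?_
    simp only [Finset.mem_Icc] at hm
    rw [sum_comps_succ]
    have hterm : ∀ b' L, gP (a :: m :: b' :: L) 0 =
        if a < m ∧ a = b' then m - a else 0 := by
      intro b' L; simp [gP]
    calc ∑ b' ∈ Finset.Icc 1 (N-a-m), ∑ L ∈ comps (N-a-m-b') j, gP (a :: m :: b' :: L) 0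
        = ∑ b' ∈ Finset.Icc 1 (N-a-m),
            (if a = b' then (m - a) * (comps (N-a-m-b') j).card else 0) := by
          refine Finset.sum_congr rfl fun b' _ => ?_
          simp only [hterm, Finset.sum_const, smul_eq_mul]
          rcases eq_or_ne a b' with rfl | h2
          · by_cases h1 : a < m
            · simp [h1, mul_comm]
            · simp [h1, Nat.sub_eq_zero_of_le (le_of_not_gt h1)]
          · simp [h2]
      _ = if a ∈ Finset.Icc 1 (N-a-m) then (m - a) * (comps (N-a-m-a) j).card else 0 :=
          Finset.sum_ite_eq _ a _
      _ = if a < m ∧ 2*a + m ≤ N then (m - a) * (comps (N - 2*a - m) ((j+3)-3)).card else 0 := by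
          have harith : N - a - m - a = N - 2*a - m := by omega
          have hj : (j+3)-3 = j := by omega
          rw [harith, hj]
          by_cases hc : a < m ∧ 2*a + m ≤ N
          · have hmem : a ∈ Finset.Icc 1 (N-a-m) := by simp only [Finset.mem_Icc]; omega
            rw [if_pos hmem, if_pos hc]
          · rw [if_neg hc]
            by_cases hmem : a ∈ Finset.Icc 1 (N-a-m)
            · rw [if_pos hmem]
              simp only [Finset.mem_Icc] at hmem
              have : m - a = 0 := by omega
              simp [this]
            · rw [if_neg hmem]
  · intro m hm hm'
    simp only [Finset.mem_Icc] at hm hm'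
    have hcond : ¬ (a < m ∧ 2*a + m ≤ N) := by omega
    simp [hcond]

lemma Es_rec (N j : ℕ) :
    ∑ a ∈ Finset.Icc 1 N, Es (N-a) (j+3) = Es N (j+4) := by
  have hstep : ∀ a ∈ Finset.Icc 1 N, Es (N-a) (j+3) =
      ∑ b ∈ Finset.Icc 1 N, ∑ m ∈ Finset.Icc 1 N,
        (if b < m ∧ 2*b + m ≤ N-a then (m - b) * (comps (N-a - 2*b - m) j).card else 0) := by
    intro a ha
    simp only [Finset.mem_Icc] at ha
    rw [Es]
    have hj : (j+3)-3 = j := by omega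
    rw [hj]
    rw [← Finset.sum_subset (Finset.Icc_subset_Icc_right (by omega : N - a ≤ N))]
    · refine Finset.sum_congr rfl fun b hb => ?_
      simp only [Finset.mem_Icc] at hb
      rw [← Finset.sum_subset (Finset.Icc_subset_Icc_right (by omega : N - a ≤ N))]
      intro m hm hm'
      simp only [Finset.mem_Icc] at hm hm'
      have : ¬ (b < m ∧ 2*b + m ≤ N-a) := by omega
      simp [this]
    · intro b hb hb'
      simp only [Finset.mem_Icc] at hb hb'
      refine Finset.sum_eq_zero fun m hm => ?_
      simp only [Finset.mem_Icc] at hm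
      have : ¬ (b < m ∧ 2*b + m ≤ N-a) := by omega
      simp [this]
  rw [Finset.sum_congr rfl hstep, Es]
  rw [Finset.sum_comm]
  refine Finset.sum_congr rfl fun b hb => ?_
  simp only [Finset.mem_Icc] at hb
  rw [Finset.sum_comm]
  refine Finset.sum_congr rfl fun m hm => ?_
  simp only [Finset.mem_Icc] at hm
  by_cases hbm : b < m
  · simp only [hbm, true_and]
    have hj : (j+4)-3 = j+1 := by omega
    rw [hj]
    have hsum : ∑ a ∈ Finset.Icc 1 N, (if 2*b + m ≤ N-a then (m - b) * (comps (N-a - 2*b - m) j).card else 0)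
        = ∑ a ∈ Finset.Icc 1 (N - 2*b - m), (m - b) * (comps ((N - 2*b - m) - a) j).card := by
      have hss : Finset.Icc 1 (N - 2*b - m) ⊆ Finset.Icc 1 N :=
        Finset.Icc_subset_Icc_right (by omega)
      have hz : ∀ x ∈ Finset.Icc 1 N, x ∉ Finset.Icc 1 (N - 2*b - m) →
          (if 2*b + m ≤ N-x then (m - b) * (comps (N-x - 2*b - m) j).card else 0) = 0 := by
        intro x hx hx'
        simp only [Finset.mem_Icc] at hx hx'
        have : ¬ (2*b + m ≤ N-x) := by omega
        simp [this]
      rw [← Finset.sum_subset hss hz]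
      refine Finset.sum_congr rfl fun a ha => ?_
      simp only [Finset.mem_Icc] at ha
      have hc : 2*b + m ≤ N-a := by omega
      have harith : N-a - 2*b - m = (N - 2*b - m) - a := by omega
      rw [if_pos hc, harith]
    rw [hsum, ← Finset.mul_sum, ← card_comps_succ]
    by_cases h2 : 2*b + m ≤ N
    · rw [if_pos h2]
    · rw [if_neg h2]
      have hz : N - 2*b - m = 0 := by omega
      rw [hz, comps_eq_empty (by omega)]
      simp
  · have h1 : ¬ (b < m ∧ 2*b + m ≤ N) := fun h => hbm h.1
    simp only [h1, if_false]
    refine Finset.sum_eq_zero fun a _ => ?_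
    have : ¬ (b < m ∧ 2*b + m ≤ N-a) := fun h => hbm h.1
    simp [this]

lemma Fs_eq_Es (i N j : ℕ) (h : i + 3 ≤ j) : Fs i N j = Es N j := by
  induction i generalizing N j with
  | zero =>
    obtain ⟨j', rfl⟩ : ∃ j', j = j' + 3 := ⟨j - 3, by omega⟩
    exact Fs_zero N j'
  | succ i ih =>
    obtain ⟨j', rfl⟩ : ∃ j', j = j' + 4 := ⟨j - 4, by omega⟩
    rw [Fs_succ]
    have hc : ∀ a ∈ Finset.Icc 1 N, Fs i (N-a) (j'+3) = Es (N-a) (j'+3) :=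
      fun a _ => ih (N-a) (j'+3) (by omega)
    rw [Finset.sum_congr rfl hc, Es_rec]

lemma hspNK_eq (n k : ℕ) : hspNK n k = ∑ L ∈ comps n k, hspL L := by
  rw [hspNK]
  refine Finset.sum_bij (fun c _ => c.blocks) ?_ ?_ ?_ ?_
  · intro c hc
    simp only [Finset.mem_filter] at hc
    exact mem_comps.2 ⟨hc.2, c.blocks_sum, fun x hx => c.blocks_pos hx⟩
  · intro c₁ _ c₂ _ h
    exact Composition.ext h
  · intro L hL
    obtain ⟨h1, h2, h3⟩ := mem_comps.1 hL
    exact ⟨⟨L, fun {i} hi => h3 i hi, h2⟩, Finset.mem_filter.2 ⟨Finset.mem_univ _, h1⟩, rfl⟩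
  · intro c _; rfl

/-- For `n ≥ 0` and `k ≥ 4`,
`hsp(n,k) = (k−2)·Σ_{m=2}^{n−k+1} Σ_{b=1}^{min{m−1,t}} C(n−2b−m−1, k−4)·(m−b)`,
where `t = ⌊(n−m−k+3)/2⌋`.  (All subtractions below are exact: within the summation
ranges no natural-number truncation occurs, and empty ranges give empty sums.) -/
theorem hspNK_combinatorial (n k : ℕ) (hk : 4 ≤ k) :
    hspNK n k =
      (k - 2) * ∑ m ∈ Finset.Icc 2 (n - k + 1),
        ∑ b ∈ Finset.Icc 1 (min (m - 1) ((n + 3 - m - k) / 2)),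
          Nat.choose (n - 2*b - m - 1) (k - 4) * (m - b) := by
  have step1 : hspNK n k = (k - 2) * Es n k := by
    rw [hspNK_eq]
    have h1 : ∀ L ∈ comps n k, hspL L = ∑ i ∈ Finset.range (k - 2), gP L i := by
      intro L hL
      rw [hspL_eq, (mem_comps.1 hL).1]
    rw [Finset.sum_congr rfl h1, Finset.sum_comm]
    have h2 : ∀ i ∈ Finset.range (k-2), ∑ L ∈ comps n k, gP L i = Es n k := by
      intro i hi
      simp only [Finset.mem_range] at hi
      exact Fs_eq_Es i n k (by omega)
    rw [Finset.sum_congr rfl h2, Finset.sum_const, Finset.card_range, smul_eq_mul]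
  rw [step1]
  congr 1
  rw [Es, Finset.sum_comm]
  symm
  have hss1 : Finset.Icc 2 (n-k+1) ⊆ Finset.Icc 1 n := fun x hx => by
    simp only [Finset.mem_Icc] at hx ⊢; omega
  rw [← Finset.sum_subset hss1]
  · refine Finset.sum_congr rfl fun m hm => ?_
    simp only [Finset.mem_Icc] at hm
    have hss2 : Finset.Icc 1 (min (m-1) ((n+3-m-k)/2)) ⊆ Finset.Icc 1 n := fun x hx => by
      simp only [Finset.mem_Icc, le_min_iff] at hx ⊢
      omega
    rw [← Finset.sum_subset hss2]
    · refine Finset.sum_congr rfl fun b hb => ?_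
      simp only [Finset.mem_Icc] at hb
      have hbm : b ≤ m - 1 := le_trans hb.2 (min_le_left _ _)
      have hbt : b ≤ (n+3-m-k)/2 := le_trans hb.2 (min_le_right _ _)
      have hb1 : 1 ≤ b := hb.1
      have h2b : 2*b ≤ n+3-m-k := by omega
      have hcond : b < m ∧ 2*b + m ≤ n := by omega
      rw [if_pos hcond]
      obtain ⟨k', rfl⟩ : ∃ k', k = k' + 4 := ⟨k - 4, by omega⟩
      have hN : 1 ≤ n - 2*b - m := by omega
      have hk3 : (k'+4) - 3 = k' + 1 := by omega
      rw [hk3, card_comps k' hN]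
      have hk4 : (k'+4) - 4 = k' := by omega
      rw [hk4, mul_comm]
    · intro b hb hb'
      simp only [Finset.mem_Icc] at hb hb'
      by_cases hc : b < m ∧ 2*b + m ≤ n
      · have hbt : ¬ (b ≤ (n+3-m-k)/2) := by omega
        have hlt : n - 2*b - m < k - 3 := by omega
        rw [if_pos hc, comps_eq_empty hlt]
        simp
      · rw [if_neg hc]
  · intro m hm hm'
    simp only [Finset.mem_Icc] at hm hm'
    refine Finset.sum_eq_zero fun b hb => ?_
    simp only [Finset.mem_Icc] at hb
    by_cases hc : b < m ∧ 2*b + m ≤ n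
    · have hlt : n - 2*b - m < k - 3 := by omega
      rw [if_pos hc, comps_eq_empty hlt]
      simp
    · rw [if_neg hc]
end

section
/- For every integer n ≥ 3, hsp(n,3) = Σ_{m=2}^{n−2} h_m, where h_m = (3m−n)/2 if n−m is even and 1 ≤ (n−m)/2 ≤ m−1, and h_m = 0 otherwise. (The condition 1 ≤ (n−m)/2 ≤ m−1 says that b = (n−m)/2 is a positive integer smaller than m, so that b m b is a genuine symmetric peak.) -/
lemma hspL_three (a b d : ℕ) : hspL [a,b,d] = if a < b ∧ a = d then b - a else 0 := by
  have h3 : (Finset.range 3) = {0,1,2} := rfl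
  unfold hspL symPeakIdx
  simp [h3, Finset.filter_insert, Finset.filter_singleton]
  split_ifs <;> simp


/-- For `n ≥ 3`, `hsp(n,3) = Σ_{m=2}^{n−2} h_m`, where `h_m = (3m−n)/2` if `n−m` is even
and `1 ≤ (n−m)/2 ≤ m−1`, and `h_m = 0` otherwise. -/
theorem hspN3_combinatorial (n : ℕ) (hn : 3 ≤ n) :
    hspNK n 3 =
      ∑ m ∈ Finset.Icc 2 (n - 2),
        if (n - m) % 2 = 0 ∧ 1 ≤ (n - m) / 2 ∧ (n - m) / 2 ≤ m - 1
        then (3 * m - n) / 2 else 0 := by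

  rw [hspNK, ← Finset.sum_filter,
    ← Finset.sum_filter_ne_zero ((Finset.univ : Finset (Composition n)).filter
      (fun c => c.length = 3))]
  refine Finset.sum_bij' (i := fun c _ => c.blocks.getD 1 0)
    (j := fun m hm => ⟨[(n-m)/2, m, (n-m)/2],
      by
        simp only [Finset.mem_filter, Finset.mem_Icc] at hm
        intro i hi
        simp at hi
        rcases hi with h | h | h <;> omega,
      by
        simp only [Finset.mem_filter, Finset.mem_Icc] at hm
        simp
        omega⟩) ?_ ?_ ?_ ?_ ?_
  · intro c hc
    simp only [Finset.mem_filter, Finset.mem_univ, true_and] at hc ⊢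
    obtain ⟨hlen, hne⟩ := hc
    obtain ⟨a, b, d, hb⟩ := List.length_eq_three.mp (by simpa [Composition.length] using hlen)
    have hsum : a + (b + d) = n := by
      have := c.blocks_sum; rw [hb] at this; simpa using this
    have hpos : 0 < a ∧ 0 < b ∧ 0 < d := by
      refine ⟨c.blocks_pos ?_, c.blocks_pos ?_, c.blocks_pos ?_⟩ <;> simp [hb]
    rw [hb, hspL_three] at hne
    by_cases h : a < b ∧ a = d
    · simp [hb]
      obtain ⟨h1, h2⟩ := h
      refine ⟨⟨by omega, by omega⟩, by omega, by omega, by omega⟩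
    · simp [h] at hne
  · intro m hm
    simp only [Finset.mem_filter, Finset.mem_Icc, Finset.mem_univ, true_and] at hm ⊢
    constructor
    · simp [Composition.length]
    · rw [hspL_three]
      have : (n-m)/2 < m := by omega
      simp [this]
      omega
  · intro c hc
    simp only [Finset.mem_filter, Finset.mem_univ, true_and] at hc
    obtain ⟨hlen, hne⟩ := hc
    obtain ⟨a, b, d, hb⟩ := List.length_eq_three.mp (by simpa [Composition.length] using hlen)
    have hsum : a + (b + d) = n := by
      have := c.blocks_sum; rw [hb] at this; simpa using this
    rw [hb, hspL_three] at hne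
    by_cases h : a < b ∧ a = d
    · apply Composition.ext
      simp [hb]
      obtain ⟨h1, h2⟩ := h
      constructor
      · omega
      · omega
    · simp [h] at hne
  · intro m hm
    simp
  · intro c hc
    simp only [Finset.mem_filter, Finset.mem_univ, true_and] at hc
    obtain ⟨hlen, hne⟩ := hc
    obtain ⟨a, b, d, hb⟩ := List.length_eq_three.mp (by simpa [Composition.length] using hlen)
    have hsum : a + (b + d) = n := by
      have := c.blocks_sum; rw [hb] at this; simpa using this
    rw [hb, hspL_three] at hne
    have hm1 : c.blocks.getD 1 0 = b := by rw [hb]; rfl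
    rw [hb, hspL_three]
    rw [show [a, b, d].getD 1 0 = b from rfl]
    by_cases h : a < b ∧ a = d
    · rw [if_pos h]
      omega
    · simp [h] at hne
end
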